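/- arXiv:1308.0632 — 13 statements merged into one kernel-verified Lean document; each statement's English description precedes it below -/
import Mathlib

section
/- Let P = [Q_1 | ⋯ | Q_s] be an r × sn parent matrix for (S, D). Let T' be a t × n matrix over F such that the vertically stacked matrix (Q_1; ⋯ ; Q_s; T') has trivial kernel, and let T' be partitioned into matrices G'_1, …, G'_s (so that stacking G'_1, …, G'_s vertically recovers T'). If H_1, …, H_s are matrices over F with n columns such that ker H_i equals the kernel of the stacked matrix (G'_i; Q_i) for every i, then H_1, …, H_s form a lossless linear compression of S. -/
open Matrix

/-- A source with deviation symmetry: `S ⊆ (F^n)^s` is closed under uniform shifts. -/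
def DevSym {F : Type*} [Field F] {s n : ℕ} (S : Set (Fin s → Fin n → F)) : Prop :=
  ∀ x ∈ S, ∀ v : Fin n → F, (fun i => x i + v) ∈ S

/-- `D` is a representative set of `S`: `D ⊆ S` and every `σ ∈ S` is uniquely
`σ = (d_1 + v, …, d_s + v)` with `(d_1,…,d_s) ∈ D`, `v ∈ F^n`. -/
def RepSet {F : Type*} [Field F] {s n : ℕ} (S D : Set (Fin s → Fin n → F)) : Prop :=
  D ⊆ S ∧ ∀ σ ∈ S, ∃! dv : (Fin s → Fin n → F) × (Fin n → F),
    dv.1 ∈ D ∧ σ = fun i => dv.1 i + dv.2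

/-- The vectorized representative set `D̃ ⊆ F^{sn}` (identifying `(F^n)^s ≃ F^{sn}`). -/
def vecD {F : Type*} [Field F] {s n : ℕ} (D : Set (Fin s → Fin n → F)) :
    Set (Fin s × Fin n → F) :=
  (fun d (p : Fin s × Fin n) => d p.1 p.2) '' D

/-- The parent matrix `P = [Q_1 | ⋯ | Q_s]`. -/
def parentMatrix {F : Type*} [Field F] {s n r : ℕ}
    (Q : Fin s → Matrix (Fin r) (Fin n) F) : Matrix (Fin r) (Fin s × Fin n) F :=
  Matrix.of fun k p => Q p.1 k p.2

/-- `(H_1, …, H_s)` is a lossless linear compression of `S`: the joint encoding map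
`(x_1,…,x_s) ↦ (H_1 x_1, …, H_s x_s)` is injective on `S`. -/
def Lossless {F : Type*} [Field F] {s n : ℕ} {m : Fin s → ℕ}
    (H : ∀ i, Matrix (Fin (m i)) (Fin n) F) (S : Set (Fin s → Fin n → F)) : Prop :=
  Set.InjOn (fun x (i : Fin s) => (H i).mulVec (x i)) S

/-- Pre-Matrix Partition Codes are lossless linear compressions. -/
theorem stmt_0 {F : Type*} [Field F] {s n : ℕ} (hs : 2 ≤ s) (hn : 1 ≤ n)
    (S D : Set (Fin s → Fin n → F)) (hSym : DevSym S) (hRep : RepSet S D)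
    {r : ℕ} (Q : Fin s → Matrix (Fin r) (Fin n) F)
    (hQ0 : ∑ i, Q i = 0)
    (hPinj : Set.InjOn (parentMatrix Q).mulVec (vecD D))
    {t : Fin s → ℕ} (G' : ∀ i, Matrix (Fin (t i)) (Fin n) F)
    (hstack : ∀ v : Fin n → F,
      (∀ i, (Q i).mulVec v = 0) → (∀ i, (G' i).mulVec v = 0) → v = 0)
    {m : Fin s → ℕ} (H : ∀ i, Matrix (Fin (m i)) (Fin n) F)
    (hker : ∀ i (v : Fin n → F),
      (H i).mulVec v = 0 ↔ ((G' i).mulVec v = 0 ∧ (Q i).mulVec v = 0)) :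
    Lossless H S := by
  intro x hx y hy hxy
  obtain ⟨hDS, hUnique⟩ := hRep
  obtain ⟨⟨d, v⟩, ⟨hd, hxd⟩, -⟩ := hUnique x hx
  obtain ⟨⟨e, w⟩, ⟨he, hye⟩, -⟩ := hUnique y hy
  have hGQ : ∀ i, (G' i).mulVec (x i - y i) = 0 ∧ (Q i).mulVec (x i - y i) = 0 := by
    intro i
    apply (hker i _).mp
    have h1 : (H i).mulVec (x i) = (H i).mulVec (y i) := congrFun hxy i
    rw [Matrix.mulVec_sub, h1, sub_self]
  have hQxy : ∀ i, (Q i).mulVec (x i) = (Q i).mulVec (y i) := by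
    intro i
    have := (hGQ i).2
    rw [Matrix.mulVec_sub, sub_eq_zero] at this
    exact this
  have hPcalc : ∀ (a : Fin s → Fin n → F) (k : Fin r),
      (parentMatrix Q).mulVec (fun p : Fin s × Fin n => a p.1 p.2) k
        = ∑ i, (Q i).mulVec (a i) k := by
    intro a k
    simp [parentMatrix, Matrix.mulVec, dotProduct, Fintype.sum_prod_type]
  have hsumv : ∀ u : Fin n → F, ∑ i, (Q i).mulVec u = 0 := by
    intro u
    have : (∑ i, Q i).mulVec u = 0 := by rw [hQ0, Matrix.zero_mulVec]
    rw [← this]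
    induction (Finset.univ : Finset (Fin s)) using Finset.induction with
    | empty => simp
    | insert _ _ h ih => simp [Finset.sum_insert h, Matrix.add_mulVec, ih]
  have key : (fun p : Fin s × Fin n => d p.1 p.2) = fun p => e p.1 p.2 := by
    apply hPinj ⟨d, hd, rfl⟩ ⟨e, he, rfl⟩
    funext k
    have hda : ∀ i, d i = x i - v := by
      intro i; have := congrFun hxd i; rw [this]; abel
    have hea : ∀ i, e i = y i - w := by
      intro i; have := congrFun hye i; rw [this]; abel
    rw [hPcalc, hPcalc]
    calc ∑ i, (Q i).mulVec (d i) k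
        = ∑ i, ((Q i).mulVec (x i) k - (Q i).mulVec v k) := by
          refine Finset.sum_congr rfl fun i _ => ?_
          rw [hda i, Matrix.mulVec_sub]; rfl
      _ = ∑ i, (Q i).mulVec (x i) k - ∑ i, (Q i).mulVec v k := by
          rw [Finset.sum_sub_distrib]
      _ = ∑ i, (Q i).mulVec (y i) k - ∑ i, (Q i).mulVec w k := by
          rw [show (∑ i, (Q i).mulVec v k) = 0 from by
              have := congrFun (hsumv v) k; simpa using this,
            show (∑ i, (Q i).mulVec w k) = 0 from by
              have := congrFun (hsumv w) k; simpa using this]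
          congr 1
          exact Finset.sum_congr rfl fun i _ => by rw [hQxy i]
      _ = ∑ i, ((Q i).mulVec (y i) k - (Q i).mulVec w k) := by
          rw [Finset.sum_sub_distrib]
      _ = ∑ i, (Q i).mulVec (e i) k := by
          refine Finset.sum_congr rfl fun i _ => ?_
          rw [hea i, Matrix.mulVec_sub]; rfl
  have hde : d = e := by
    funext i j; exact congrFun key (i, j)
  have hdiff : ∀ i, x i - y i = v - w := by
    intro i
    rw [congrFun hxd i, congrFun hye i, hde]
    abel
  have huw : v - w = 0 := by
    apply hstack
    · intro i; rw [← hdiff i]; exact (hGQ i).2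
    · intro i; rw [← hdiff i]; exact (hGQ i).1
  funext i
  have := hdiff i
  rw [huw, sub_eq_zero] at this
  exact this
end

section
/- Let P = [Q_1 | ⋯ | Q_s] be an r × sn parent matrix for (S, D), let T' be a t × n matrix such that the stacked matrix (Q_1; ⋯ ; Q_s; T') has trivial kernel, let T' be partitioned into G'_1, …, G'_s, and let H_1, …, H_s be matrices with n columns and m_1, …, m_s rows respectively such that ker H_i equals the kernel of the stacked matrix (G'_i; Q_i) for every i. Then m_i ≥ rank Q_i for every i, and the sum over i of (m_i − rank Q_i) is at least n − rank(Q_1; ⋯ ; Q_s), where (Q_1; ⋯ ; Q_s) denotes the vertical stack of Q_1, …, Q_s. Consequently the total code length satisfies M = m_1 + ⋯ + m_s ≥ rank Q_1 + ⋯ + rank Q_s + n − rank(Q_1; ⋯ ; Q_s). -/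
open Matrix

open Module


lemma aux_codim {F : Type*} [Field F] {n : ℕ} (A B V : Submodule F (Fin n → F)) (hAB : A ≤ B) :
    finrank F A + finrank F (B ⊓ V : Submodule F (Fin n → F)) ≤
      finrank F B + finrank F (A ⊓ V : Submodule F (Fin n → F)) := by
  have h := Submodule.finrank_sup_add_finrank_inf_eq A (B ⊓ V)
  have h1 : A ⊓ (B ⊓ V) = A ⊓ V := by
    rw [← inf_assoc, inf_eq_left.mpr hAB]
  rw [h1] at h
  have h2 : A ⊔ (B ⊓ V) ≤ B := sup_le hAB inf_le_left
  have h3 := Submodule.finrank_mono h2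
  omega

lemma aux_tele {F : Type*} [Field F] {n : ℕ} {ι : Type*}
    (W : Submodule F (Fin n → F)) (Wf Vf : ι → Submodule F (Fin n → F))
    (hW : ∀ i, W ≤ Wf i) (c : ι → ℕ)
    (hc : ∀ i, finrank F (Wf i) ≤ finrank F (Wf i ⊓ Vf i : Submodule F (Fin n → F)) + c i)
    (T : Finset ι) :
    finrank F W ≤ finrank F (W ⊓ T.inf Vf : Submodule F (Fin n → F)) + ∑ i ∈ T, c i := by
  classical
  induction T using Finset.induction with
  | empty => rw [Finset.inf_empty, inf_top_eq]; simp
  | @insert a T ha ih =>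
    have key := aux_codim (W ⊓ T.inf Vf) (Wf a) (Vf a) (inf_le_left.trans (hW a))
    have h1 : (W ⊓ T.inf Vf) ⊓ Vf a = W ⊓ (insert a T).inf Vf := by
      rw [Finset.inf_insert, inf_assoc, inf_comm (Vf a)]
    rw [h1] at key
    have hca := hc a
    rw [Finset.sum_insert ha]
    omega

lemma aux_rn {F : Type*} [Field F] {n : ℕ} {p : Type*} [Fintype p]
    (A : Matrix p (Fin n) F) :
    A.rank + finrank F (LinearMap.ker A.mulVecLin) = n := by
  have h := LinearMap.finrank_range_add_finrank_ker A.mulVecLin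
  rwa [Module.finrank_fin_fun] at h

theorem stmt_1' {F : Type*} [Field F] {s n : ℕ}
    {r : ℕ} (Q : Fin s → Matrix (Fin r) (Fin n) F)
    {t : Fin s → ℕ} (G' : ∀ i, Matrix (Fin (t i)) (Fin n) F)
    (hstack : ∀ v : Fin n → F,
      (∀ i, (Q i).mulVec v = 0) → (∀ i, (G' i).mulVec v = 0) → v = 0)
    {m : Fin s → ℕ} (H : ∀ i, Matrix (Fin (m i)) (Fin n) F)
    (hker : ∀ i (v : Fin n → F),
      (H i).mulVec v = 0 ↔ ((G' i).mulVec v = 0 ∧ (Q i).mulVec v = 0)) :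
    (∀ i, (Q i).rank ≤ m i) ∧
    (n - (Matrix.of fun (q : Fin s × Fin r) (j : Fin n) => Q q.1 q.2 j :
        Matrix (Fin s × Fin r) (Fin n) F).rank ≤ ∑ i, (m i - (Q i).rank)) ∧
    ((∑ i, (Q i).rank) +
        (n - (Matrix.of fun (q : Fin s × Fin r) (j : Fin n) => Q q.1 q.2 j :
          Matrix (Fin s × Fin r) (Fin n) F).rank) ≤ ∑ i, m i) := by
  classical
  set Qstack : Matrix (Fin s × Fin r) (Fin n) F :=
    Matrix.of fun (q : Fin s × Fin r) (j : Fin n) => Q q.1 q.2 j with hQs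
  set KQ : Fin s → Submodule F (Fin n → F) := fun i => LinearMap.ker (Q i).mulVecLin with hKQ
  set KG : Fin s → Submodule F (Fin n → F) := fun i => LinearMap.ker (G' i).mulVecLin with hKG
  set KH : Fin s → Submodule F (Fin n → F) := fun i => LinearMap.ker (H i).mulVecLin with hKH
  set W : Submodule F (Fin n → F) := LinearMap.ker Qstack.mulVecLin with hWdef
  have memKQ : ∀ i (v : Fin n → F), v ∈ KQ i ↔ (Q i).mulVec v = 0 := fun i v =>
    LinearMap.mem_ker
  have memKG : ∀ i (v : Fin n → F), v ∈ KG i ↔ (G' i).mulVec v = 0 := fun i v =>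
    LinearMap.mem_ker
  have memW : ∀ v : Fin n → F, v ∈ W ↔ ∀ i, (Q i).mulVec v = 0 := by
    intro v
    rw [hWdef, LinearMap.mem_ker, mulVecLin_apply]
    constructor
    · intro h i
      funext k
      exact congrFun h (i, k)
    · intro h
      funext q
      exact congrFun (h q.1) q.2
  have hKHeq : ∀ i, KH i = KQ i ⊓ KG i := by
    intro i
    ext v
    simp only [Submodule.mem_inf, hKH, hKQ, hKG, LinearMap.mem_ker, mulVecLin_apply]
    rw [hker i v]
    tauto
  -- rank-nullity facts
  have rnQ : ∀ i, (Q i).rank + finrank F (KQ i) = n := fun i => aux_rn (Q i)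
  have rnH : ∀ i, (H i).rank + finrank F (KH i) = n := fun i => aux_rn (H i)
  have rnW : Qstack.rank + finrank F W = n := aux_rn Qstack
  have hHm : ∀ i, (H i).rank ≤ m i := by
    intro i
    simpa using (H i).rank_le_card_height
  have hKHle : ∀ i, finrank F (KH i) ≤ finrank F (KQ i) := by
    intro i
    apply Submodule.finrank_mono
    rw [hKHeq i]
    exact inf_le_left
  have part1 : ∀ i, (Q i).rank ≤ m i := by
    intro i
    have h1 := rnQ i; have h2 := rnH i; have h3 := hHm i; have h4 := hKHle i
    omega
  have hWle : ∀ i, W ≤ KQ i := by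
    intro i v hv
    exact (memKQ i v).mpr ((memW v).mp hv i)
  have hc : ∀ i, finrank F (KQ i) ≤
      finrank F (KQ i ⊓ KG i : Submodule F (Fin n → F)) + (m i - (Q i).rank) := by
    intro i
    rw [← hKHeq i]
    have h1 := rnQ i; have h2 := rnH i; have h3 := hHm i; have h4 := hKHle i
    omega
  have hbot : W ⊓ Finset.univ.inf KG = ⊥ := by
    rw [eq_bot_iff]
    intro v hv
    obtain ⟨hv1, hv2⟩ := Submodule.mem_inf.mp hv
    have hg : ∀ i, (G' i).mulVec v = 0 := by
      intro i
      exact (memKG i v).mp (Submodule.mem_finsetInf.mp hv2 i (Finset.mem_univ i))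
    have := hstack v ((memW v).mp hv1) hg
    simp [this]
  have tele := aux_tele W KQ KG hWle (fun i => m i - (Q i).rank) hc Finset.univ
  rw [hbot] at tele
  simp only [finrank_bot, zero_add] at tele
  have part2 : n - Qstack.rank ≤ ∑ i, (m i - (Q i).rank) := by omega
  refine ⟨part1, part2, ?_⟩
  have hsum : ∑ i, ((Q i).rank + (m i - (Q i).rank)) = ∑ i, m i := by
    apply Finset.sum_congr rfl
    intro i _
    have := part1 i
    omega
  rw [← hsum, Finset.sum_add_distrib]
  omega

/-- rank bounds for Pre-Matrix Partition Codes, and the resulting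
lower bound on the total code length `M = m_1 + ⋯ + m_s`. -/
theorem stmt_1 {F : Type*} [Field F] {s n : ℕ} (hs : 2 ≤ s) (hn : 1 ≤ n)
    (S D : Set (Fin s → Fin n → F)) (hSym : DevSym S) (hRep : RepSet S D)
    {r : ℕ} (Q : Fin s → Matrix (Fin r) (Fin n) F)
    (hQ0 : ∑ i, Q i = 0)
    (hPinj : Set.InjOn (parentMatrix Q).mulVec (vecD D))
    {t : Fin s → ℕ} (G' : ∀ i, Matrix (Fin (t i)) (Fin n) F)
    (hstack : ∀ v : Fin n → F,
      (∀ i, (Q i).mulVec v = 0) → (∀ i, (G' i).mulVec v = 0) → v = 0)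
    {m : Fin s → ℕ} (H : ∀ i, Matrix (Fin (m i)) (Fin n) F)
    (hker : ∀ i (v : Fin n → F),
      (H i).mulVec v = 0 ↔ ((G' i).mulVec v = 0 ∧ (Q i).mulVec v = 0)) :
    (∀ i, (Q i).rank ≤ m i) ∧
    (n - (Matrix.of fun (q : Fin s × Fin r) (j : Fin n) => Q q.1 q.2 j :
        Matrix (Fin s × Fin r) (Fin n) F).rank ≤ ∑ i, (m i - (Q i).rank)) ∧
    ((∑ i, (Q i).rank) +
        (n - (Matrix.of fun (q : Fin s × Fin r) (j : Fin n) => Q q.1 q.2 j :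
          Matrix (Fin s × Fin r) (Fin n) F).rank) ≤ ∑ i, m i) := by
  exact stmt_1' Q G' hstack H hker
end

section
/- Let P = [Q_1 | ⋯ | Q_s] be an r × sn parent matrix for (S, D). For any nonnegative integers r_1, …, r_s satisfying r_1 + ⋯ + r_s ≥ n − rank(Q_1; ⋯ ; Q_s), where (Q_1; ⋯ ; Q_s) denotes the vertical stack of Q_1, …, Q_s, there exist matrices H_1, …, H_s over F, where H_i has exactly rank Q_i + r_i rows and n columns, forming a lossless linear compression of S. -/
open Matrix

/-- Dot product with a fixed right factor, as a linear map. -/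
noncomputable def dpL {F : Type*} [Field F] {n : ℕ} (z : Fin n → F) :
    (Fin n → F) →ₗ[F] F where
  toFun u := u ⬝ᵥ z
  map_add' u v := add_dotProduct u v z
  map_smul' c u := smul_dotProduct c u z

lemma dpL_apply {F : Type*} [Field F] {n : ℕ} (z u : Fin n → F) :
    dpL z u = u ⬝ᵥ z := rfl

lemma dp_all_zero {F : Type*} [Field F] {n : ℕ} {z : Fin n → F}
    (h : ∀ u : Fin n → F, u ⬝ᵥ z = 0) : z = 0 := by
  funext j
  have := h (Pi.single j 1)
  simpa [single_dotProduct] using this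

/-- every row-count tuple allowed by the rank inequality of
Theorem 2.2 is achievable by a lossless linear compression (Corollary 1). -/
theorem stmt_2 {F : Type*} [Field F] {s n : ℕ} (hs : 2 ≤ s) (hn : 1 ≤ n)
    (S D : Set (Fin s → Fin n → F)) (hSym : DevSym S) (hRep : RepSet S D)
    {r : ℕ} (Q : Fin s → Matrix (Fin r) (Fin n) F)
    (hQ0 : ∑ i, Q i = 0)
    (hPinj : Set.InjOn (parentMatrix Q).mulVec (vecD D))
    (rv : Fin s → ℕ)
    (hrv : n - (Matrix.of fun (q : Fin s × Fin r) (j : Fin n) => Q q.1 q.2 j :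
        Matrix (Fin s × Fin r) (Fin n) F).rank ≤ ∑ i, rv i) :
    ∃ H : ∀ i, Matrix (Fin ((Q i).rank + rv i)) (Fin n) F, Lossless H S := by
  classical
  set M : Matrix (Fin s × Fin r) (Fin n) F :=
    Matrix.of fun (q : Fin s × Fin r) (j : Fin n) => Q q.1 q.2 j with hMdef
  -- per-component row space bases
  have hWi : ∀ i, Module.finrank F (Submodule.span F (Set.range (Q i))) = (Q i).rank :=
    fun i => ((Q i).rank_eq_finrank_span_row).symm
  let b : ∀ i, Module.Basis (Fin ((Q i).rank)) F (Submodule.span F (Set.range (Q i))) :=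
    fun i => Module.finBasisOfFinrankEq F _ (hWi i)
  let A : ∀ i, Matrix (Fin ((Q i).rank)) (Fin n) F := fun i k => (b i k : Fin n → F)
  have hAspan : ∀ i, Submodule.span F (Set.range (A i)) =
      Submodule.span F (Set.range (Q i)) := by
    intro i
    have : Set.range (A i) = (Submodule.span F (Set.range (Q i))).subtype '' Set.range (b i) := by
      ext u; constructor
      · rintro ⟨k, rfl⟩; exact ⟨b i k, ⟨k, rfl⟩, rfl⟩
      · rintro ⟨w, ⟨k, rfl⟩, rfl⟩; exact ⟨k, rfl⟩
    rw [this, Submodule.span_image, (b i).span_eq, Submodule.map_top, Submodule.range_subtype]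
  -- the global row space and its complement
  set W : Submodule F (Fin n → F) := Submodule.span F (Set.range M) with hWdef
  obtain ⟨W', hWc⟩ := W.exists_isCompl
  have hfW : Module.finrank F W = M.rank := (M.rank_eq_finrank_span_row).symm
  have hWW' : Module.finrank F W + Module.finrank F W' = n := by
    have := Submodule.finrank_add_eq_of_isCompl hWc
    rwa [Module.finrank_fin_fun] at this
  have hcard : Module.finrank F W' ≤ ∑ i, rv i := by omega
  let bc : Module.Basis (Fin (Module.finrank F W')) F W' := Module.finBasis F W'
  let c : Fin (Module.finrank F W') → Fin n → F := fun k => (bc k : Fin n → F)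
  have hcspan : Submodule.span F (Set.range c) = W' := by
    have : Set.range c = W'.subtype '' Set.range bc := by
      ext u; constructor
      · rintro ⟨k, rfl⟩; exact ⟨bc k, ⟨k, rfl⟩, rfl⟩
      · rintro ⟨w, ⟨k, rfl⟩, rfl⟩; exact ⟨k, rfl⟩
    rw [this, Submodule.span_image, bc.span_eq, Submodule.map_top, Submodule.range_subtype]
  obtain ⟨f⟩ : Nonempty (Fin (Module.finrank F W') ↪ Σ i, Fin (rv i)) := by
    apply Function.Embedding.nonempty_of_card_le
    simpa [Fintype.card_sigma] using hcard
  let B : ∀ i, Matrix (Fin (rv i)) (Fin n) F := fun i k =>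
    if h : ∃ m, f m = ⟨i, k⟩ then c h.choose else 0
  have hBc : ∀ m, B (f m).1 (f m).2 = c m := by
    intro m
    have h : ∃ m', f m' = ⟨(f m).1, (f m).2⟩ := ⟨m, by rw [Sigma.eta]⟩
    have hch : h.choose = m := by
      apply f.injective
      rw [h.choose_spec, Sigma.eta]
    show (if h' : ∃ m', f m' = ⟨(f m).1, (f m).2⟩ then c h'.choose else 0) = c m
    rw [dif_pos h, hch]
  refine ⟨fun i => Matrix.of (Fin.append (A i) (B i)), ?_⟩
  intro x hx y hy hxy
  obtain ⟨⟨d, v⟩, ⟨hdD, hdx⟩, _⟩ := hRep.2 x hx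
  obtain ⟨⟨e, w⟩, ⟨heD, hey⟩, _⟩ := hRep.2 y hy
  -- componentwise consequences of the code equality
  have hA : ∀ i k, A i k ⬝ᵥ x i = A i k ⬝ᵥ y i := by
    intro i k
    have h1 := congrFun (congrFun hxy i) (Fin.castAdd (rv i) k)
    simp only [Matrix.mulVec, Matrix.of_apply] at h1
    rw [Fin.append_left] at h1
    simpa using h1
  have hB : ∀ i k, B i k ⬝ᵥ x i = B i k ⬝ᵥ y i := by
    intro i k
    have h1 := congrFun (congrFun hxy i) (Fin.natAdd ((Q i).rank) k)
    simp only [Matrix.mulVec, Matrix.of_apply] at h1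
    rw [Fin.append_right] at h1
    simpa using h1
  -- rows of Q i also agree
  have hQrow : ∀ i k, Q i k ⬝ᵥ x i = Q i k ⬝ᵥ y i := by
    intro i k
    have hker : Submodule.span F (Set.range (Q i)) ≤ LinearMap.ker (dpL (x i - y i)) := by
      rw [← hAspan i]
      rw [Submodule.span_le]
      rintro u ⟨k', rfl⟩
      simp only [SetLike.mem_coe, LinearMap.mem_ker, dpL_apply]
      rw [dotProduct_sub, hA i k', sub_self]
    have hmem : Q i k ∈ Submodule.span F (Set.range (Q i)) :=
      Submodule.subset_span ⟨k, rfl⟩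
    have := hker hmem
    rw [LinearMap.mem_ker, dpL_apply, dotProduct_sub, sub_eq_zero] at this
    exact this
  -- the parent matrix determines the representative
  have hPd : ∀ g : Fin s → Fin n → F,
      (parentMatrix Q).mulVec (fun p => g p.1 p.2) = ∑ i, (Q i).mulVec (g i) := by
    intro g
    funext k
    simp only [parentMatrix, Matrix.mulVec, dotProduct, Matrix.of_apply,
      Finset.sum_apply, Fintype.sum_prod_type]
  have hsumQv : ∀ u : Fin n → F, ∑ i, (Q i).mulVec u = 0 := by
    intro u
    funext k
    simp only [Finset.sum_apply, Matrix.mulVec, dotProduct, Pi.zero_apply]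
    rw [Finset.sum_comm]
    refine Finset.sum_eq_zero fun j _ => ?_
    rw [← Finset.sum_mul]
    have : (∑ i, Q i) k j = (0 : Matrix (Fin r) (Fin n) F) k j := by rw [hQ0]
    simp only [Finset.sum_apply, Matrix.sum_apply, Matrix.zero_apply] at this ⊢
    rw [this, zero_mul]
  have hsum : ∑ i, (Q i).mulVec (d i) = ∑ i, (Q i).mulVec (e i) := by
    have hx' : ∀ i, (Q i).mulVec (x i) = (Q i).mulVec (d i) + (Q i).mulVec v := by
      intro i
      rw [hdx]
      exact Matrix.mulVec_add _ _ _
    have hy' : ∀ i, (Q i).mulVec (y i) = (Q i).mulVec (e i) + (Q i).mulVec w := by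
      intro i
      rw [hey]
      exact Matrix.mulVec_add _ _ _
    have hQxy : ∑ i, (Q i).mulVec (x i) = ∑ i, (Q i).mulVec (y i) := by
      refine Finset.sum_congr rfl fun i _ => ?_
      funext k
      exact hQrow i k
    calc ∑ i, (Q i).mulVec (d i)
        = ∑ i, (Q i).mulVec (d i) + ∑ i, (Q i).mulVec v := by rw [hsumQv v, add_zero]
      _ = ∑ i, ((Q i).mulVec (d i) + (Q i).mulVec v) := by rw [Finset.sum_add_distrib]
      _ = ∑ i, (Q i).mulVec (x i) := by exact Finset.sum_congr rfl fun i _ => (hx' i).symm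
      _ = ∑ i, (Q i).mulVec (y i) := hQxy
      _ = ∑ i, ((Q i).mulVec (e i) + (Q i).mulVec w) := Finset.sum_congr rfl fun i _ => hy' i
      _ = ∑ i, (Q i).mulVec (e i) + ∑ i, (Q i).mulVec w := by rw [Finset.sum_add_distrib]
      _ = ∑ i, (Q i).mulVec (e i) := by rw [hsumQv w, add_zero]
  have hde : d = e := by
    have h1 : (fun p : Fin s × Fin n => d p.1 p.2) = (fun p : Fin s × Fin n => e p.1 p.2) :=
      hPinj ⟨d, hdD, rfl⟩ ⟨e, heD, rfl⟩ (by rw [hPd d, hPd e, hsum])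
    funext i
    funext j
    exact congrFun h1 (i, j)
  -- recover the shift
  have hvw : v = w := by
    have hQz : ∀ i k, Q i k ⬝ᵥ (v - w) = 0 := by
      intro i k
      have h1 := hQrow i k
      rw [hdx, hey, ← hde] at h1
      simp only [dotProduct_add] at h1
      rw [dotProduct_sub, sub_eq_zero]
      exact add_left_cancel h1
    have hBz : ∀ i k, B i k ⬝ᵥ (v - w) = 0 := by
      intro i k
      have h1 := hB i k
      rw [hdx, hey, ← hde] at h1
      simp only [dotProduct_add] at h1
      rw [dotProduct_sub, sub_eq_zero]
      exact add_left_cancel h1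
    have hker : (⊤ : Submodule F (Fin n → F)) ≤ LinearMap.ker (dpL (v - w)) := by
      rw [← hWc.codisjoint.eq_top]
      apply sup_le
      · rw [hWdef, Submodule.span_le]
        rintro u ⟨q, rfl⟩
        simp only [SetLike.mem_coe, LinearMap.mem_ker, dpL_apply]
        exact hQz q.1 q.2
      · rw [← hcspan, Submodule.span_le]
        rintro u ⟨m, rfl⟩
        simp only [SetLike.mem_coe, LinearMap.mem_ker, dpL_apply]
        rw [← hBc m]
        exact hBz _ _
    have hz : ∀ u : Fin n → F, u ⬝ᵥ (v - w) = 0 := by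
      intro u
      have := hker (Submodule.mem_top : u ∈ ⊤)
      rwa [LinearMap.mem_ker, dpL_apply] at this
    have := dp_all_zero hz
    rwa [sub_eq_zero] at this
  rw [hdx, hey, hde, hvw]
end

section
/- Let D and E both be representative sets of the same source with deviation symmetry S, with vectorized versions D̃ and Ẽ in F^{sn}. If P = [Q_1 | ⋯ | Q_s] is an r × sn matrix over F with Q_1 + ⋯ + Q_s = 0 whose restriction to D̃ is injective, then the restriction of P to Ẽ is also injective. -/
open Matrix

lemma shift_mulVec {F : Type*} [Field F] {s n r : ℕ}
    (Q : Fin s → Matrix (Fin r) (Fin n) F) (hQ0 : ∑ i, Q i = 0)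
    (x : Fin s → Fin n → F) (v : Fin n → F) :
    (parentMatrix Q).mulVec (fun p : Fin s × Fin n => x p.1 p.2 + v p.2) =
      (parentMatrix Q).mulVec (fun p : Fin s × Fin n => x p.1 p.2) := by
  funext k
  simp only [Matrix.mulVec, dotProduct, parentMatrix, Matrix.of_apply, mul_add,
    Finset.sum_add_distrib]
  have : ∑ p : Fin s × Fin n, Q p.1 k p.2 * v p.2 = 0 := by
    rw [Fintype.sum_prod_type]
    have := congrFun (congrFun (congrArg Matrix.mulVec hQ0) v) k
    simpa [Matrix.mulVec, dotProduct, Matrix.sum_apply, Finset.sum_mul,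
      Finset.sum_comm (γ := Fin n)] using this
  rw [this, add_zero]

/-- a parent matrix for one representative set of `S` is injective on the
vectorization of any other representative set of `S` (Theorem 2.3). -/
theorem stmt_3 {F : Type*} [Field F] {s n : ℕ} (hs : 2 ≤ s) (hn : 1 ≤ n)
    (S D E : Set (Fin s → Fin n → F)) (hSym : DevSym S)
    (hRepD : RepSet S D) (hRepE : RepSet S E)
    {r : ℕ} (Q : Fin s → Matrix (Fin r) (Fin n) F)
    (hQ0 : ∑ i, Q i = 0)
    (hPinj : Set.InjOn (parentMatrix Q).mulVec (vecD D)) :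
    Set.InjOn (parentMatrix Q).mulVec (vecD E) := by
  rintro x ⟨e, heE, rfl⟩ y ⟨e', he'E, rfl⟩ hxy
  have heS : e ∈ S := hRepE.1 heE
  have he'S : e' ∈ S := hRepE.1 he'E
  obtain ⟨⟨d, v⟩, ⟨hdD, hed⟩, _⟩ := hRepD.2 e heS
  obtain ⟨⟨d', v'⟩, ⟨hd'D, he'd⟩, _⟩ := hRepD.2 e' he'S
  -- P ẽ = P d̃
  have key : ∀ (a : Fin s → Fin n → F) (w : Fin n → F) (b : Fin s → Fin n → F),
      b = (fun i => a i + w) →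
      (parentMatrix Q).mulVec (fun p : Fin s × Fin n => b p.1 p.2) =
      (parentMatrix Q).mulVec (fun p : Fin s × Fin n => a p.1 p.2) := by
    intro a w b hb
    have : (fun p : Fin s × Fin n => b p.1 p.2) =
        (fun p : Fin s × Fin n => a p.1 p.2 + w p.2) := by
      funext p; rw [hb]; rfl
    rw [this, shift_mulVec Q hQ0]
  have h1 := key d v e hed
  have h2 := key d' v' e' he'd
  have hdd : (fun p : Fin s × Fin n => d p.1 p.2) = fun p : Fin s × Fin n => d' p.1 p.2 := by
    apply hPinj ⟨d, hdD, rfl⟩ ⟨d', hd'D, rfl⟩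
    rw [h1.symm.trans (hxy.trans h2)]
  have hdd' : d = d' := by
    funext i j; exact congrFun hdd (i, j)
  subst hdd'
  -- now e = d + v, e' = d + v'; use uniqueness for E on σ = e'
  obtain ⟨u, hu, huniq⟩ := hRepE.2 e' he'S
  have r1 : (⟨e', 0⟩ : (Fin s → Fin n → F) × (Fin n → F)) = u := by
    apply huniq; exact ⟨he'E, by funext i; simp⟩
  have r2 : (⟨e, v' - v⟩ : (Fin s → Fin n → F) × (Fin n → F)) = u := by
    apply huniq
    refine ⟨heE, ?_⟩
    funext i
    rw [he'd, hed]
    funext j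
    simp [sub_eq_iff_eq_add]
  have : e = e' := congrArg Prod.fst (r2.trans r1.symm)
  rw [this]
end

section
/- (Nullspace shifting) Let S be a source with deviation symmetry in (F^n)^s, let π be a permutation of {1,…,s}, and let K, N_1, …, N_s be linear subspaces of F^n with K ∩ N_i = {0} for all i. Suppose H_1, …, H_s are matrices over F with n columns such that ker H_{π(i)} = K + N_i for 1 ≤ i ≤ s−1 and ker H_{π(s)} = N_s, and suppose H'_1, …, H'_s are matrices over F with n columns such that ker H'_{π(1)} = N_1 and ker H'_{π(i)} = K + N_i for 2 ≤ i ≤ s. If H_1, …, H_s form a lossless linear compression of S, then H'_1, …, H'_s also form a lossless linear compression of S. -/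
open Matrix

/-- Nullspace shifting, Theorem 8.1: moving the common kernel summand `K`
from the first `s-1` terminals (in the order given by `π`) to the last `s-1` terminals
preserves losslessness.  Indices `1,…,s` are represented by `Fin s` (so `i = 0`
corresponds to terminal `1` and `i = s-1` to terminal `s`). -/
theorem stmt_5 {F : Type*} [Field F] {s n : ℕ} (hs : 2 ≤ s) (hn : 1 ≤ n)
    (S : Set (Fin s → Fin n → F)) (hSym : DevSym S)
    (K : Submodule F (Fin n → F)) (N : Fin s → Submodule F (Fin n → F))
    (hKN : ∀ i, K ⊓ N i = ⊥)
    (π : Equiv.Perm (Fin s))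
    {m : Fin s → ℕ} (H : ∀ i, Matrix (Fin (m i)) (Fin n) F)
    {m' : Fin s → ℕ} (H' : ∀ i, Matrix (Fin (m' i)) (Fin n) F)
    (hH1 : ∀ i : Fin s, i.val < s - 1 →
      LinearMap.ker (H (π i)).mulVecLin = K ⊔ N i)
    (hH2 : LinearMap.ker (H (π ⟨s - 1, by omega⟩)).mulVecLin = N ⟨s - 1, by omega⟩)
    (hH'1 : LinearMap.ker (H' (π ⟨0, by omega⟩)).mulVecLin = N ⟨0, by omega⟩)
    (hH'2 : ∀ i : Fin s, 0 < i.val →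
      LinearMap.ker (H' (π i)).mulVecLin = K ⊔ N i)
    (hLoss : Lossless H S) :
    Lossless H' S := by
  intro x hx y hy hxy
  have hd : ∀ j, x j - y j ∈ LinearMap.ker (H' j).mulVecLin := by
    intro j
    have h := congrFun hxy j
    simp only [] at h
    rw [LinearMap.mem_ker, Matrix.mulVecLin_apply, Matrix.mulVec_sub, h, sub_self]
  set sl : Fin s := ⟨s - 1, by omega⟩ with hsl
  have hdl := hd (π sl)
  rw [hH'2 sl (by simp [hsl]; omega)] at hdl
  obtain ⟨k, hk, nn, hnn, hsum⟩ := Submodule.mem_sup.mp hdl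
  have hy' : (fun i => y i + k) ∈ S := hSym y hy k
  have key : (fun (i : Fin s) => (H i).mulVec (x i)) =
      fun i => (H i).mulVec ((fun i => y i + k) i) := by
    funext j
    obtain ⟨i, rfl⟩ := π.surjective j
    have hker : x (π i) - (y (π i) + k) ∈ LinearMap.ker (H (π i)).mulVecLin := by
      by_cases hi : i.val < s - 1
      · rw [hH1 i hi]
        have h1 : x (π i) - y (π i) ∈ K ⊔ N i := by
          by_cases hi0 : i.val = 0
          · have hieq : i = ⟨0, by omega⟩ := Fin.ext hi0
            have := hd (π i)
            rw [hieq, hH'1] at this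
            rw [hieq]
            exact Submodule.mem_sup_right this
          · have := hd (π i)
            rw [hH'2 i (by omega)] at this
            exact this
        have h2 : x (π i) - (y (π i) + k) = (x (π i) - y (π i)) - k := by ring
        rw [h2]
        exact Submodule.sub_mem _ h1 (Submodule.mem_sup_left hk)
      · have hieq : i = sl := Fin.ext (by simp [hsl]; omega)
        rw [hieq, hH2]
        have h2 : x (π sl) - (y (π sl) + k) = nn := by
          have := hsum
          linear_combination (norm := module) -this
        rw [h2]
        exact hnn
    rw [LinearMap.mem_ker, Matrix.mulVecLin_apply, Matrix.mulVec_sub,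
      sub_eq_zero] at hker
    exact hker
  have heq := hLoss hx hy' key
  set z : Fin s := ⟨0, by omega⟩ with hz
  have hk0 : x (π z) - y (π z) ∈ N z := by
    have := hd (π z)
    rwa [hz, hH'1] at this
  have hkk : x (π z) - y (π z) = k := by
    have := congrFun heq (π z)
    have this : x (π z) = y (π z) + k := this
    rw [this]; ring
  have hk_zero : k = 0 := by
    have : k ∈ K ⊓ N z := ⟨hk, hkk ▸ hk0⟩
    rw [hKN z] at this
    exact this
  funext j
  have := congrFun heq j
  simp only [hk_zero, add_zero] at this
  exact this
end

section
/- Let S be a source with deviation symmetry in (F^n)^s with representative set D and vectorized representative set D̃ ⊆ F^{sn}, and suppose H_1, …, H_s form a lossless linear compression of S. Define the linear maps X : F^{sn} → F^{(s−1)n} by X(x_1,…,x_s) = (x_1 − x_2, x_2 − x_3, …, x_{s−1} − x_s) and J : F^{sn} → F^{m_1} × ⋯ × F^{m_s} by J(x_1,…,x_s) = (H_1x_1, …, H_sx_s), and define the two-terminal source S' = {(v, v + d) : v ∈ F^{sn}, d ∈ D̃} ⊆ F^{sn} × F^{sn}. Then the map (x, y) ↦ (Xx, Jy) is injective on S'; that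 is, (X, J) is a lossless linear compression of S'. -/
open Matrix

/-- Lemma 9: the pair `(X, J)`, where `X` takes successive differences and
`J` applies the given encoders blockwise, is a lossless linear compression of the
two-terminal source `S' = {(v, v + d) : v ∈ F^{sn}, d ∈ D̃}`. -/
theorem stmt_6 {F : Type*} [Field F] {s n : ℕ} (hs : 2 ≤ s) (hn : 1 ≤ n)
    (S D : Set (Fin s → Fin n → F)) (hSym : DevSym S) (hRep : RepSet S D)
    {m : Fin s → ℕ} (H : ∀ i, Matrix (Fin (m i)) (Fin n) F)
    (hLoss : Lossless H S) :
    Set.InjOn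
      (fun p : (Fin s × Fin n → F) × (Fin s × Fin n → F) =>
        ((fun q : Fin (s - 1) × Fin n =>
            p.1 (⟨q.1.val, by omega⟩, q.2) - p.1 (⟨q.1.val + 1, by omega⟩, q.2)),
         (fun i : Fin s => (H i).mulVec (fun j => p.2 (i, j)))))
      {p : (Fin s × Fin n → F) × (Fin s × Fin n → F) |
        ∃ v : Fin s × Fin n → F, ∃ d ∈ vecD D, p = (v, v + d)} := by
  rintro p ⟨u, d, ⟨δ, hδ, rfl⟩, rfl⟩ p' ⟨u', d', ⟨δ', hδ', rfl⟩, rfl⟩ heq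
  have heq1 := congrArg Prod.fst heq
  have heq2 := congrArg Prod.snd heq
  simp only at heq1 heq2
  have hs0 : (0 : ℕ) < s := by omega
  set w : Fin n → F := fun j => u' (⟨0, hs0⟩, j) - u (⟨0, hs0⟩, j) with hw
  have hc : ∀ k (hk : k < s) (j : Fin n),
      u' (⟨k, hk⟩, j) - u (⟨k, hk⟩, j) = w j := by
    intro k
    induction k with
    | zero => intro hk j; rfl
    | succ k ih =>
      intro hk j
      have hk' : k < s := by omega
      have hk1 : k < s - 1 := by omega
      have h1 := congrFun heq1 (⟨⟨k, hk1⟩, j⟩)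
      have h2 := ih hk' j
      simp only at h1
      rw [← h2]
      linear_combination h1
  have hc' : ∀ (i : Fin s) (j : Fin n), u' (i, j) = u (i, j) + w j := by
    intro i j
    have := hc i.val i.isLt j
    simp only [Fin.eta] at this
    linear_combination this
  -- encoding equality for the representatives
  have key : (fun i : Fin s => (H i).mulVec (δ i)) =
      fun i : Fin s => (H i).mulVec (fun j => δ' i j + w j) := by
    funext i
    have h2 := congrFun heq2 i
    simp only [Pi.add_apply] at h2
    have e1 : (fun j => u (i, j) + δ i j) = (fun j => u (i, j)) + δ i := rfl
    have e2 : (fun j => u' (i, j) + δ' i j)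
        = (fun j => u (i, j)) + (fun j => δ' i j + w j) := by
      funext j; simp only [Pi.add_apply]; rw [hc' i j]; ring
    rw [e1, e2, Matrix.mulVec_add, Matrix.mulVec_add] at h2
    exact add_left_cancel h2
  have hδS : δ ∈ S := hRep.1 hδ
  have hδ'S : (fun i => δ' i + w) ∈ S := hSym δ' (hRep.1 hδ') w
  have hδeq : δ = fun i => δ' i + w := by
    apply hLoss hδS hδ'S
    funext i
    exact congrFun key i
  obtain ⟨dv, hdv, huniq⟩ := hRep.2 δ hδS
  have h1 : ((δ', w) : (Fin s → Fin n → F) × (Fin n → F)) = dv :=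
    huniq (δ', w) ⟨hδ', by funext i; exact congrFun hδeq i⟩
  have h2 : ((δ, 0) : (Fin s → Fin n → F) × (Fin n → F)) = dv :=
    huniq (δ, 0) ⟨hδ, by funext i j; simp⟩
  have h3 : ((δ', w) : (Fin s → Fin n → F) × (Fin n → F)) = (δ, 0) :=
    h1.trans h2.symm
  have hδδ' : δ' = δ := congrArg Prod.fst h3
  have hw0 : w = 0 := congrArg Prod.snd h3
  have huu : u = u' := by
    funext q
    have := hc' q.1 q.2
    rw [hw0] at this
    simp at this
    rw [this.symm]
  subst hδδ' huu
  rfl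
end

section
/- (Necessary condition for perfect compression) Let F be a finite field and let S be a source with deviation symmetry in (F^n)^s with representative set D and vectorized representative set D̃ ⊆ F^{sn}. Suppose matrices H_1, …, H_s (H_i of size m_i × n) form a perfect lossless linear compression of S, i.e. the joint map is injective on S and |F|^M = |S| where M = m_1 + ⋯ + m_s. Then M ≥ n and there exists an (M − n) × sn matrix P = [Q_1 | ⋯ | Q_s] over F with Q_1 + ⋯ + Q_s = 0 whose restriction to D̃ is a bijection from D̃ onto F^{M−n}. -/
open Matrix

/-- Necessary condition for perfect compression, Theorem 6: a perfect
lossless linear compression (`|F|^M = |S|`) forces `M ≥ n` and the existence of an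
`(M-n) × sn` matrix `P = [Q_1 | ⋯ | Q_s]` with `Q_1 + ⋯ + Q_s = 0` that restricts to a
bijection from `D̃` onto `F^{M-n}`. -/
theorem stmt_9 {F : Type*} [Field F] [Fintype F] {s n : ℕ} (hs : 2 ≤ s) (hn : 1 ≤ n)
    (S D : Set (Fin s → Fin n → F)) (hSym : DevSym S) (hRep : RepSet S D)
    {m : Fin s → ℕ} (H : ∀ i, Matrix (Fin (m i)) (Fin n) F)
    (hLoss : Lossless H S)
    (hPerfect : Fintype.card F ^ (∑ i, m i) = Nat.card S) :
    n ≤ ∑ i, m i ∧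
    ∃ Q : Fin s → Matrix (Fin (∑ i, m i - n)) (Fin n) F,
      (∑ i, Q i = 0) ∧
      Set.BijOn (parentMatrix Q).mulVec (vecD D) Set.univ := by
  classical
  set M := ∑ i, m i with hM
  have hF1 : (1:ℕ) < Fintype.card F := Fintype.one_lt_card
  -- S is nonempty
  have hSne : S.Nonempty := by
    have hpos : 0 < Nat.card S := by
      rw [← hPerfect]; exact pow_pos (by omega) _
    obtain ⟨x⟩ := (Nat.card_pos_iff.mp hpos).1
    exact ⟨x, x.2⟩
  obtain ⟨x0, hx0⟩ := hSne
  -- the linear encoder Φ and the shift map L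
  set Φ : (Fin s → Fin n → F) →ₗ[F] (∀ i, Fin (m i) → F) :=
    LinearMap.pi (fun i => ((H i).mulVecLin).comp (LinearMap.proj i)) with hΦdef
  set L : (Fin n → F) →ₗ[F] (∀ i, Fin (m i) → F) :=
    LinearMap.pi (fun i => (H i).mulVecLin) with hLdef
  have hΦ : ∀ x, Φ x = fun i => (H i).mulVec (x i) := fun x => rfl
  have hLap : ∀ v, L v = fun i => (H i).mulVec v := fun v => rfl
  have hΦadd : ∀ (x : Fin s → Fin n → F) (v : Fin n → F),
      Φ (fun i => x i + v) = Φ x + L v := by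
    intro x v
    funext i
    simp [hΦ, hLap, Matrix.mulVec_add]
  -- L is injective
  have hLinj : Function.Injective L := by
    intro v v' hvv
    have h1 : (fun i => x0 i + v) ∈ S := hSym x0 hx0 v
    have h2 : (fun i => x0 i + v') ∈ S := hSym x0 hx0 v'
    have heq := hLoss h1 h2 (by
      show (fun i => (H i).mulVec (x0 i + v)) = fun i => (H i).mulVec (x0 i + v')
      have e1 : (fun i => (H i).mulVec (x0 i + v)) = Φ (fun i => x0 i + v) := rfl
      have e2 : (fun i => (H i).mulVec (x0 i + v')) = Φ (fun i => x0 i + v') := rfl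
      rw [e1, e2, hΦadd, hΦadd, hvv])
    have := congrFun heq ⟨0, by omega⟩
    simpa using this
  -- D is nonempty
  obtain ⟨dv0, ⟨hdv0D, _⟩, _⟩ := hRep.2 x0 hx0
  have hDne : D.Nonempty := ⟨dv0.1, hdv0D⟩
  -- bijection D × F^n ≃ S
  have hbijDS : Function.Bijective
      (fun dv : ↥D × (Fin n → F) =>
        (⟨fun i => (dv.1 : Fin s → Fin n → F) i + dv.2,
          hSym _ (hRep.1 dv.1.2) dv.2⟩ : ↥S)) := by
    constructor
    · rintro ⟨⟨d, hd⟩, v⟩ ⟨⟨d', hd'⟩, v'⟩ h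
      simp only [Subtype.mk.injEq] at h
      obtain ⟨dv1, _, huniq⟩ := hRep.2 _ (hSym d (hRep.1 hd) v)
      have h1 := huniq (d, v) ⟨hd, rfl⟩
      have h2 := huniq (d', v') ⟨hd', h⟩
      have h3 := h1.trans h2.symm
      simp only [Prod.mk.injEq] at h3
      simp [Prod.ext_iff, Subtype.ext_iff, h3.1, h3.2]
    · rintro ⟨σ, hσ⟩
      obtain ⟨dv1, ⟨hdv1, hσeq⟩, _⟩ := hRep.2 σ hσ
      exact ⟨(⟨dv1.1, hdv1⟩, dv1.2), Subtype.ext hσeq.symm⟩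
  have hcardDS : Nat.card ↥D * Fintype.card F ^ n = Nat.card ↥S := by
    have := Nat.card_eq_of_bijective _ hbijDS
    rwa [Nat.card_prod, Nat.card_eq_fintype_card (α := Fin n → F),
      Fintype.card_fun, Fintype.card_fin] at this
  have hcardS : Fintype.card F ^ M = Nat.card ↥D * Fintype.card F ^ n := by
    rw [hcardDS]; exact hPerfect
  have hDpos : 0 < Nat.card ↥D := by
    have : Nonempty ↥D := ⟨⟨dv0.1, hdv0D⟩⟩
    exact Nat.card_pos
  -- M ≥ n
  have hnM : n ≤ M := by
    have : Fintype.card F ^ n ≤ Fintype.card F ^ M := by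
      rw [hcardS]
      exact Nat.le_mul_of_pos_left _ hDpos
    exact (Nat.pow_le_pow_iff_right hF1).mp this
  refine ⟨hnM, ?_⟩
  -- |D| = |F|^(M-n)
  have hDcard : Nat.card ↥D = Fintype.card F ^ (M - n) := by
    have h1 : Fintype.card F ^ (M - n) * Fintype.card F ^ n
        = Nat.card ↥D * Fintype.card F ^ n := by
      rw [← pow_add, Nat.sub_add_cancel hnM, hcardS]
    exact (Nat.eq_of_mul_eq_mul_right (pow_pos (by omega) n) h1).symm
  -- dimension computations
  set W : Submodule F (∀ i, Fin (m i) → F) := LinearMap.range L with hWdef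
  have hWrank : Module.finrank F W = n := by
    rw [LinearMap.finrank_range_of_inj hLinj]
    simp [Module.finrank_pi]
  have hCrank : Module.finrank F (∀ i, Fin (m i) → F) = M := by
    rw [Module.finrank_pi_fintype]
    simp [Module.finrank_pi]
    exact hM.symm
  have hQrank : Module.finrank F ((∀ i, Fin (m i) → F) ⧸ W) = M - n := by
    have := Submodule.finrank_quotient_add_finrank W
    omega
  -- the projection π
  let bQ : Module.Basis (Fin (M - n)) F ((∀ i, Fin (m i) → F) ⧸ W) :=
    (Module.finBasis F _).reindex (finCongr hQrank)
  set π : (∀ i, Fin (m i) → F) →ₗ[F] (Fin (M - n) → F) :=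
    (bQ.equivFun.toLinearMap).comp W.mkQ with hπdef
  have hπzero : ∀ c, π c = 0 ↔ c ∈ W := by
    intro c
    constructor
    · intro h
      have h0 : W.mkQ c = 0 := by
        apply bQ.equivFun.injective
        rw [map_zero]
        exact h
      rwa [← Submodule.Quotient.mk_eq_zero, ← Submodule.mkQ_apply]
    · intro h
      have : W.mkQ c = 0 := by
        rwa [Submodule.mkQ_apply, Submodule.Quotient.mk_eq_zero]
      simp [hπdef, this]
  have hπsurj : Function.Surjective π :=
    (bQ.equivFun.surjective).comp (Submodule.mkQ_surjective W)
  -- the total map T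
  set T : (Fin s → Fin n → F) →ₗ[F] (Fin (M - n) → F) := π.comp Φ with hTdef
  -- the matrices Q
  set Q : Fin s → Matrix (Fin (M - n)) (Fin n) F :=
    fun i => LinearMap.toMatrix' (T.comp (LinearMap.single F (fun _ : Fin s => Fin n → F) i))
    with hQdef
  have hQmul : ∀ i v, (Q i).mulVec v = T (Pi.single i v) := by
    intro i v
    rw [← Matrix.toLin'_apply, hQdef, Matrix.toLin'_toMatrix']
    rfl
  -- key identity
  have hPT : ∀ x : Fin s → Fin n → F,
      (parentMatrix Q).mulVec (fun p => x p.1 p.2) = T x := by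
    intro x
    have h1 : (parentMatrix Q).mulVec (fun p => x p.1 p.2)
        = ∑ i, (Q i).mulVec (x i) := by
      funext k
      rw [Finset.sum_apply]
      simp only [Matrix.mulVec, dotProduct, parentMatrix, Matrix.of_apply]
      rw [Fintype.sum_prod_type]
    rw [h1]
    have h2 : ∀ i, (Q i).mulVec (x i) = T (Pi.single i (x i)) := fun i => hQmul i (x i)
    simp_rw [h2]
    rw [← map_sum, Finset.univ_sum_single]
  -- T kills constant shifts
  have hTconst : ∀ v : Fin n → F, T (fun _ => v) = 0 := by
    intro v
    have : Φ (fun _ => v) = L v := rfl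
    rw [hTdef]
    show π (Φ fun _ => v) = 0
    rw [this, (hπzero (L v)).mpr ⟨v, rfl⟩]
  -- sum of Q is zero
  have hQsum : ∑ i, Q i = 0 := by
    apply Matrix.toLin'.injective
    apply LinearMap.ext
    intro v
    rw [Matrix.toLin'_apply]
    have : (∑ i, Q i).mulVec v = ∑ i, (Q i).mulVec v := by
      funext k
      rw [Finset.sum_apply]
      simp only [Matrix.mulVec, dotProduct, Finset.sum_apply]
      rw [Finset.sum_comm]
      congr 1
      funext j
      rw [Matrix.sum_apply]
      simp [Finset.sum_mul]
    rw [this]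
    simp_rw [hQmul]
    rw [← map_sum, Finset.univ_sum_single]
    · exact (hTconst v).trans (by simp)
  refine ⟨Q, hQsum, ?_⟩
  -- T is injective on D
  have hTinj : Set.InjOn T D := by
    intro d hd d' hd' hTe
    have hmem : Φ d - Φ d' ∈ W := by
      rw [← hπzero]
      have : π (Φ d) = π (Φ d') := hTe
      simp [map_sub, this]
    obtain ⟨v, hv⟩ := hmem
    have hΦeq : Φ d = Φ (fun i => d' i + v) := by
      rw [hΦadd]
      rw [hv]
      abel
    have hd'' : (fun i => d' i + v) ∈ S := hSym d' (hRep.1 hd') v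
    have heq := hLoss (hRep.1 hd) hd'' (by
      show (fun i => (H i).mulVec (d i)) = fun i => (H i).mulVec (d' i + v)
      exact hΦeq)
    obtain ⟨dv1, _, huniq⟩ := hRep.2 d (hRep.1 hd)
    have h1 := huniq (d, 0) ⟨hd, by funext i; simp⟩
    have h2 := huniq (d', v) ⟨hd', heq⟩
    have h3 := h1.trans h2.symm
    exact (Prod.mk.injEq _ _ _ _ ▸ h3).1
  -- the restriction of T to D is bijective onto F^(M-n)
  have hTbij : Function.Bijective (fun d : ↥D => T d) := by
    rw [Nat.bijective_iff_injective_and_card]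
    constructor
    · intro d d' h
      exact Subtype.ext (hTinj d.2 d'.2 h)
    · rw [hDcard, Nat.card_eq_fintype_card, Fintype.card_fun, Fintype.card_fin]
  -- conclude
  refine ⟨fun _ _ => trivial, ?_, ?_⟩
  · rintro y ⟨d, hd, rfl⟩ y' ⟨d', hd', rfl⟩ hyy
    rw [hPT, hPT] at hyy
    rw [hTinj hd hd' hyy]
  · rintro c -
    obtain ⟨⟨d, hd⟩, hdc⟩ := hTbij.2 c
    exact ⟨fun p => d p.1 p.2, ⟨d, hd, rfl⟩, (hPT d).trans hdc⟩
end

section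
/- Let F be a finite field, L a nonempty subset of F not containing 0, s ≥ 2 and n ≥ 1 integers, and r ≥ 1 an integer such that |F|^r = 1 + |L|·s·n. Let D̃ = {λ·e_i : λ ∈ L ∪ {0}, 1 ≤ i ≤ sn} ⊆ F^{sn}, where e_1, …, e_{sn} is the standard basis of F^{sn}. Then there exists an r × sn matrix P over F whose restriction to D̃ is a bijection from D̃ onto F^r if and only if |L| divides |F| − 1 and there exist distinct elements a_1, …, a_k of F, with k = (|F| − 1)/|L|, such that F \ {0} = {a_i·λ : 1 ≤ i ≤ k, λ ∈ L}. -/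
open Matrix

section StmtAux

variable {F : Type*} [Field F] [Fintype F] [DecidableEq F]

/-- scalar freeness for nonzero vectors -/
lemma stmt10_smul_cancel {r : ℕ} {v : Fin r → F} (hv : v ≠ 0) {μ ν : F}
    (h : μ • v = ν • v) : μ = ν := by
  obtain ⟨i, hi⟩ := Function.ne_iff.1 hv
  have h2 := congrFun h i
  simp only [Pi.smul_apply, smul_eq_mul] at h2
  exact mul_right_cancel₀ (by simpa using hi) h2

lemma stmt10_single_ne {m : ℕ} {a : F} (ha : a ≠ 0) (i : Fin m) :
    a • (Pi.single i (1 : F) : Fin m → F) ≠ 0 := by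
  intro h
  have h2 := congrFun h i
  simp only [Pi.smul_apply, Pi.single_eq_same, smul_eq_mul, mul_one, Pi.zero_apply] at h2
  exact ha h2

end StmtAux

/-- Theorem 7: for the generalized Hamming source with deviation alphabet
`L`, an `r × sn` matrix that is bijective from `D̃ = {λ·e_i : λ ∈ L ∪ {0}, 1 ≤ i ≤ sn}`
onto `F^r` exists iff `|L|` divides `|F| - 1` and `F \ {0}` is the set of products
`a_i·λ` for distinct `a_1, …, a_k ∈ F` with `k = (|F|-1)/|L|` and `λ ∈ L`. -/
theorem stmt_10 {F : Type*} [Field F] [Fintype F] [DecidableEq F]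
    (L : Finset F) (hLne : L.Nonempty) (hL0 : (0 : F) ∉ L)
    {s n r : ℕ} (hs : 2 ≤ s) (hn : 1 ≤ n) (hr : 1 ≤ r)
    (hcard : Fintype.card F ^ r = 1 + L.card * s * n) :
    (∃ P : Matrix (Fin r) (Fin (s * n)) F,
      Set.BijOn P.mulVec
        {x : Fin (s * n) → F | ∃ a : F, (a ∈ L ∨ a = 0) ∧
          ∃ i : Fin (s * n), x = a • (Pi.single i (1 : F) : Fin (s * n) → F)}
        Set.univ) ↔
    (L.card ∣ Fintype.card F - 1 ∧
      ∃ a : Fin ((Fintype.card F - 1) / L.card) → F, Function.Injective a ∧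
        {b : F | b ≠ 0} = {b : F | ∃ i, ∃ l ∈ L, b = a i * l}) := by
  classical
  have hsn : 0 < s * n := Nat.mul_pos (by omega) (by omega)
  set i0 : Fin (s * n) := ⟨0, hsn⟩ with hi0
  have hLpos : 0 < L.card := Finset.card_pos.2 hLne
  constructor
  · -- forward direction
    rintro ⟨P, hb⟩
    have h0D : (0 : Fin (s * n) → F) ∈ {x : Fin (s * n) → F | ∃ a : F, (a ∈ L ∨ a = 0) ∧
        ∃ i : Fin (s * n), x = a • (Pi.single i (1 : F) : Fin (s * n) → F)} :=
      ⟨0, Or.inr rfl, i0, by simp⟩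
    have hmemD : ∀ a ∈ L, ∀ i : Fin (s * n),
        (a • (Pi.single i (1 : F) : Fin (s * n) → F)) ∈ {x : Fin (s * n) → F |
          ∃ a : F, (a ∈ L ∨ a = 0) ∧ ∃ i : Fin (s * n),
            x = a • (Pi.single i (1 : F) : Fin (s * n) → F)} :=
      fun a ha i => ⟨a, Or.inl ha, i, rfl⟩
    obtain ⟨lam0, hlam0⟩ := hLne
    have hlam0ne : lam0 ≠ 0 := fun h => hL0 (h ▸ hlam0)
    set u : Fin r → F := P.mulVec (lam0 • (Pi.single i0 1 : Fin (s * n) → F)) with hu_def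
    have hu : u ≠ 0 := by
      intro h
      have h2 : P.mulVec (lam0 • (Pi.single i0 1 : Fin (s * n) → F)) = P.mulVec 0 := by
        rw [Matrix.mulVec_zero, ← hu_def, h]
      have h3 := hb.injOn (hmemD lam0 hlam0 i0) h0D h2
      exact stmt10_single_ne hlam0ne i0 h3
    have H : ∀ μ : F, ∃ (l : F) (j : Fin (s * n)), μ ≠ 0 →
        l ∈ L ∧ P.mulVec (l • (Pi.single j 1 : Fin (s * n) → F)) = μ • u := by
      intro μ
      by_cases hμ : μ = 0
      · exact ⟨lam0, i0, fun h => absurd hμ h⟩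
      · obtain ⟨x, hxD, hPx⟩ := hb.surjOn (Set.mem_univ (μ • u))
        obtain ⟨aa, haa, j, rfl⟩ := hxD
        rcases haa with haa | rfl
        · exact ⟨aa, j, fun _ => ⟨haa, hPx⟩⟩
        · exfalso
          rw [zero_smul, Matrix.mulVec_zero] at hPx
          exact smul_ne_zero hμ hu hPx.symm
    choose lf jf hkey using H
    have hl : ∀ μ : F, μ ≠ 0 → lf μ ∈ L := fun μ h => (hkey μ h).1
    have hlne : ∀ μ : F, μ ≠ 0 → lf μ ≠ 0 := fun μ h e => hL0 (e ▸ hl μ h)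
    set ρ : F → F := fun μ => μ * (lf μ)⁻¹ with hρ_def
    have hρne : ∀ μ : F, μ ≠ 0 → ρ μ ≠ 0 :=
      fun μ h => mul_ne_zero h (inv_ne_zero (hlne μ h))
    have hρl : ∀ μ : F, μ ≠ 0 → ρ μ * lf μ = μ := by
      intro μ h
      have h2 := hlne μ h
      simp only [hρ_def]
      field_simp
    have hPe : ∀ μ : F, μ ≠ 0 → ∀ l' : F,
        P.mulVec (l' • (Pi.single (jf μ) 1 : Fin (s * n) → F)) = (ρ μ * l') • u := by
      intro μ hμ l'
      have h1 := (hkey μ hμ).2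
      rw [Matrix.mulVec_smul] at h1
      have hw : P.mulVec ((Pi.single (jf μ) 1 : Fin (s * n) → F)) = (lf μ)⁻¹ • (μ • u) :=
        ((inv_smul_eq_iff₀ (hlne μ hμ)).2 h1.symm).symm
      rw [Matrix.mulVec_smul, hw, smul_smul, smul_smul]
      congr 1
      simp only [hρ_def]
      ring
    have keyInj : ∀ μ ν l₁ l₂ : F, μ ≠ 0 → ν ≠ 0 → l₁ ∈ L → l₂ ∈ L →
        ρ μ * l₁ = ρ ν * l₂ → l₁ = l₂ ∧ ρ μ = ρ ν := by
      intro μ ν l₁ l₂ hμ hν hl₁ hl₂ h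
      have e1 : P.mulVec (l₁ • (Pi.single (jf μ) 1 : Fin (s * n) → F)) = P.mulVec (l₂ • (Pi.single (jf ν) 1 : Fin (s * n) → F)) := by
        rw [hPe μ hμ, hPe ν hν, h]
      have e2 := hb.injOn (hmemD l₁ hl₁ (jf μ)) (hmemD l₂ hl₂ (jf ν)) e1
      have e3 := congrFun e2 (jf μ)
      rw [Pi.smul_apply, Pi.smul_apply, Pi.single_eq_same, smul_eq_mul, mul_one,
        smul_eq_mul, Pi.single_apply] at e3
      by_cases hj : jf μ = jf ν
      · rw [if_pos hj, mul_one] at e3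
        refine ⟨e3, ?_⟩
        rw [e3] at h
        exact mul_right_cancel₀ (fun e => hL0 (e ▸ hl₂)) h
      · rw [if_neg hj, mul_zero] at e3
        exact absurd e3 (fun e => hL0 (e ▸ hl₁))
    set R : Finset F := (Finset.univ.erase (0 : F)).image ρ with hR_def
    have hS : (R ×ˢ L).image (fun p : F × F => p.1 * p.2) = Finset.univ.erase (0 : F) := by
      ext b
      simp only [Finset.mem_image, Finset.mem_product, Finset.mem_erase,
        Finset.mem_univ, and_true, hR_def, Prod.exists]
      constructor
      · rintro ⟨x, y, ⟨⟨μ, hμ, rfl⟩, hy⟩, rfl⟩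
        exact mul_ne_zero (hρne μ hμ) (fun e => hL0 (e ▸ hy))
      · intro hb0
        exact ⟨ρ b, lf b, ⟨⟨b, hb0, rfl⟩, hl b hb0⟩, hρl b hb0⟩
    have hinj : Set.InjOn (fun p : F × F => p.1 * p.2) ↑(R ×ˢ L) := by
      rintro ⟨x₁, y₁⟩ h₁ ⟨x₂, y₂⟩ h₂ heq
      simp only [Finset.coe_product, Set.mem_prod, Finset.mem_coe, hR_def,
        Finset.mem_image, Finset.mem_erase, Finset.mem_univ, and_true] at h₁ h₂
      obtain ⟨⟨μ, hμ, rfl⟩, hy₁⟩ := h₁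
      obtain ⟨⟨ν, hν, rfl⟩, hy₂⟩ := h₂
      obtain ⟨hy, hx⟩ := keyInj μ ν y₁ y₂ hμ hν hy₁ hy₂ heq
      simp [hy, hx]
    have hq : R.card * L.card = Fintype.card F - 1 := by
      have h1 := Finset.card_image_of_injOn hinj
      rw [hS, Finset.card_product] at h1
      rw [← h1, Finset.card_erase_of_mem (Finset.mem_univ 0), Finset.card_univ]
    have hdvd : L.card ∣ Fintype.card F - 1 := ⟨R.card, by rw [← hq]; ring⟩
    have hk : (Fintype.card F - 1) / L.card = R.card :=
      Nat.div_eq_of_eq_mul_left hLpos hq.symm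
    have hcR : Fintype.card ↥R = (Fintype.card F - 1) / L.card := by
      rw [Fintype.card_coe, hk]
    set ev : ↥R ≃ Fin ((Fintype.card F - 1) / L.card) := Fintype.equivFinOfCardEq hcR with hev
    refine ⟨hdvd, fun i => ((ev.symm i : ↥R) : F), ?_, ?_⟩
    · intro i j h
      exact ev.symm.injective (Subtype.ext h)
    · ext b
      simp only [Set.mem_setOf_eq]
      constructor
      · intro hb0
        have hmem : ρ b ∈ R := by
          rw [hR_def]
          exact Finset.mem_image.2 ⟨b, Finset.mem_erase.2 ⟨hb0, Finset.mem_univ b⟩, rfl⟩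
        refine ⟨ev ⟨ρ b, hmem⟩, lf b, hl b hb0, ?_⟩
        rw [Equiv.symm_apply_apply]
        exact (hρl b hb0).symm
      · rintro ⟨i, l, hlL, rfl⟩
        have hmem : ((ev.symm i : ↥R) : F) ∈ (Finset.univ.erase (0 : F)).image ρ :=
          (ev.symm i).2
        obtain ⟨μ, hμ, hρμ⟩ := Finset.mem_image.1 hmem
        rw [Finset.mem_erase] at hμ
        exact mul_ne_zero (hρμ ▸ hρne μ hμ.1) (fun e => hL0 (e ▸ hlL))
  · -- backward direction
    rintro ⟨hdvd, aE, hainj, hset⟩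
    have ha0 : ∀ i, aE i ≠ 0 := by
      intro i
      obtain ⟨l, hl⟩ := hLne
      have hmem : (aE i * l) ∈ {b : F | b ≠ 0} := by
        rw [hset]; exact ⟨i, l, hl, rfl⟩
      exact left_ne_zero_of_mul hmem
    set sd : Setoid {v : Fin r → F // v ≠ 0} :=
      ⟨fun v w => ∃ μ : Fˣ, (μ : F) • v.1 = w.1,
      ⟨fun v => ⟨1, by simp⟩,
       fun {v w} h => by
        obtain ⟨μ, h⟩ := h
        exact ⟨μ⁻¹, by rw [← h, smul_smul]; simp⟩,
       fun {v w z} h h2 => by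
        obtain ⟨μ, h⟩ := h
        obtain ⟨ν, h2⟩ := h2
        exact ⟨ν * μ, by rw [Units.val_mul, ← smul_smul, h, h2]⟩⟩⟩ with hsd_def
    letI : Fintype (Quotient sd) := Quotient.fintype sd
    set ψ : Fˣ × Quotient sd → {v : Fin r → F // v ≠ 0} := fun p => ⟨(p.1 : F) • p.2.out.1,
      smul_ne_zero p.1.ne_zero p.2.out.2⟩ with hψ_def
    have hψbij : Function.Bijective ψ := by
      constructor
      · rintro ⟨μ, x⟩ ⟨ν, y⟩ h
        simp only [hψ_def, Subtype.mk.injEq] at h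
        have hxy : x = y := by
          have hr1 : sd.r x.out y.out := by
            refine ⟨ν⁻¹ * μ, ?_⟩
            rw [Units.val_mul, ← smul_smul, h, smul_smul]
            simp
          have h4 := Quotient.sound hr1
          rwa [Quotient.out_eq, Quotient.out_eq] at h4
        subst hxy
        have h5 : (μ : F) = (ν : F) := stmt10_smul_cancel x.out.2 h
        exact Prod.ext (Units.ext h5) rfl
      · intro v
        obtain ⟨μ, hμ⟩ : sd.r (Quotient.mk sd v).out v :=
          Quotient.exact (Quotient.out_eq (Quotient.mk sd v))
        exact ⟨(μ, Quotient.mk sd v), Subtype.ext hμ⟩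
    have cardE : Fintype.card {v : Fin r → F // v ≠ 0} = (Fintype.card F) ^ r - 1 := by
      have h1 : Fintype.card {v : Fin r → F // v ≠ 0} =
          Fintype.card (Fin r → F) - 1 := by
        simpa using Set.card_ne_eq (0 : Fin r → F)
      rw [h1, Fintype.card_fun, Fintype.card_fin]
    have cardQE : ((Fintype.card F) - 1) * Fintype.card (Quotient sd) = (Fintype.card F) ^ r - 1 := by
      have h1 := Fintype.card_of_bijective hψbij
      rw [Fintype.card_prod, Fintype.card_units, cardE] at h1
      exact h1
    have hkL : ((Fintype.card F - 1) / L.card) * L.card = (Fintype.card F) - 1 := by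
      exact Nat.div_mul_cancel hdvd
    have hqr1 : (Fintype.card F) ^ r - 1 = L.card * (s * n) := by
      rw [hcard, mul_assoc]
      exact Nat.add_sub_cancel_left 1 (L.card * (s * n))
    have hcardkQ : Fintype.card (Fin ((Fintype.card F - 1) / L.card) × Quotient sd) = s * n := by
      rw [Fintype.card_prod, Fintype.card_fin]
      refine Nat.eq_of_mul_eq_mul_left hLpos ?_
      calc L.card * (((Fintype.card F - 1) / L.card) * Fintype.card (Quotient sd))
          = (((Fintype.card F - 1) / L.card) * L.card) * Fintype.card (Quotient sd) := by ring
        _ = ((Fintype.card F) - 1) * Fintype.card (Quotient sd) := by rw [hkL]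
        _ = (Fintype.card F) ^ r - 1 := cardQE
        _ = L.card * (s * n) := hqr1
    set g : Fin ((Fintype.card F - 1) / L.card) × Quotient sd ≃ Fin (s * n) := Fintype.equivFinOfCardEq hcardkQ with hg
    set f : Fin ((Fintype.card F - 1) / L.card) × ↥L → Fˣ := fun p => Units.mk0 (aE p.1 * (p.2 : F))
      (mul_ne_zero (ha0 p.1) (fun e => hL0 (e ▸ p.2.2))) with hf_def
    have hfsurj : Function.Surjective f := by
      intro μ
      have hμ : (μ : F) ∈ {b : F | b ≠ 0} := μ.ne_zero
      rw [hset] at hμ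
      obtain ⟨i, l, hlL, he⟩ := hμ
      exact ⟨(i, ⟨l, hlL⟩), Units.ext he.symm⟩
    have hfinj : Function.Injective f := by
      refine ((Fintype.bijective_iff_surjective_and_card f).2 ⟨hfsurj, ?_⟩).injective
      rw [Fintype.card_prod, Fintype.card_fin, Fintype.card_coe, Fintype.card_units]
      exact hkL
    set c : Fin (s * n) → Fin r → F :=
      fun j => aE (g.symm j).1 • ((g.symm j).2.out.1) with hc_def
    have hcne : ∀ j, c j ≠ 0 := fun j => smul_ne_zero (ha0 _) (g.symm j).2.out.2
    have hPc : ∀ (x : F) (j : Fin (s * n)),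
        (Matrix.of (fun i j => c j i)).mulVec (x • (Pi.single j 1 : Fin (s * n) → F)) = x • c j := by
      intro x j
      have h1 : (Matrix.of (fun i j => c j i)).mulVec ((Pi.single j 1 : Fin (s * n) → F)) = c j := by
        rw [Matrix.mulVec_single]
        funext i
        simp
      rw [Matrix.mulVec_smul, h1]
    refine ⟨Matrix.of (fun i j => c j i), ?_, ?_, ?_⟩
    · intro x _; trivial
    · -- injectivity
      rintro x ⟨ax, hax, ix, rfl⟩ y ⟨ay, hay, iy, rfl⟩ h
      rw [hPc, hPc] at h
      rcases hax with hax | rfl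
      · rcases hay with hay | rfl
        · -- both in L
          have haxne : ax ≠ 0 := fun e => hL0 (e ▸ hax)
          have hayne : ay ≠ 0 := fun e => hL0 (e ▸ hay)
          simp only [hc_def, smul_smul] at h
          set u1 := (g.symm ix).1 with hu1
          set q1 := (g.symm ix).2 with hq1
          set u2 := (g.symm iy).1 with hu2
          set q2 := (g.symm iy).2 with hq2
          have hs1 : ax * aE u1 ≠ 0 := mul_ne_zero haxne (ha0 _)
          have hs2 : ay * aE u2 ≠ 0 := mul_ne_zero hayne (ha0 _)
          have hqeq : q1 = q2 := by
            have hr1 : sd.r q1.out q2.out := by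
              refine ⟨Units.mk0 ((ay * aE u2)⁻¹ * (ax * aE u1))
                (mul_ne_zero (inv_ne_zero hs2) hs1), ?_⟩
              show ((ay * aE u2)⁻¹ * (ax * aE u1)) • q1.out.1 = q2.out.1
              rw [← smul_smul, h, smul_smul, inv_mul_cancel₀ hs2, one_smul]
            have h4 := Quotient.sound hr1
            rwa [Quotient.out_eq, Quotient.out_eq] at h4
          rw [← hqeq] at h
          have hseq : ax * aE u1 = ay * aE u2 := stmt10_smul_cancel q1.out.2 h
          have hfeq : f (u1, ⟨ax, hax⟩) = f (u2, ⟨ay, hay⟩) := by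
            apply Units.ext
            show aE u1 * ax = aE u2 * ay
            rw [mul_comm (aE u1), mul_comm (aE u2)]
            exact hseq
          have hpair := hfinj hfeq
          have hu12 : u1 = u2 := (Prod.ext_iff.1 hpair).1
          have haxy : ax = ay := Subtype.ext_iff.1 (Prod.ext_iff.1 hpair).2
          have hixy : ix = iy := by
            apply g.symm.injective
            have e1 : g.symm ix = (u1, q1) := rfl
            have e2 : g.symm iy = (u2, q2) := rfl
            rw [e1, e2, hu12, hqeq]
          rw [haxy, hixy]
        · exfalso
          rw [zero_smul] at h
          have haxne : ax ≠ 0 := fun e => hL0 (e ▸ hax)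
          exact smul_ne_zero haxne (hcne ix) h
      · rcases hay with hay | rfl
        · exfalso
          rw [zero_smul] at h
          have hayne : ay ≠ 0 := fun e => hL0 (e ▸ hay)
          exact smul_ne_zero hayne (hcne iy) h.symm
        · simp
    · -- surjectivity
      intro y _
      by_cases hy : y = 0
      · refine ⟨(0:F) • (Pi.single i0 1 : Fin (s * n) → F), ⟨0, Or.inr rfl, i0, rfl⟩, ?_⟩
        rw [hPc]
        simp [hy]
      · obtain ⟨μ, hμ⟩ : sd.r (Quotient.mk sd ⟨y, hy⟩).out ⟨y, hy⟩ :=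
          Quotient.exact (Quotient.out_eq (Quotient.mk sd ⟨y, hy⟩))
        obtain ⟨⟨i, l⟩, hfe⟩ := hfsurj μ
        refine ⟨(l : F) • (Pi.single (g (i, Quotient.mk sd ⟨y, hy⟩)) 1 : Fin (s * n) → F),
          ⟨l, Or.inl l.2, _, rfl⟩, ?_⟩
        rw [hPc]
        simp only [hc_def, Equiv.symm_apply_apply]
        rw [smul_smul]
        have hval : (l : F) * aE i = (μ : F) := by
          have h6 := congrArg Units.val hfe
          simp only [hf_def, Units.val_mk0] at h6
          rw [mul_comm]
          exact h6
        rw [hval]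
        exact hμ
end

section
/- Let F be a finite field, L a nonempty subset of F not containing 0, n ≥ 1 an integer, and set L± = L ∪ (−L). Let r ≥ 1 be an integer such that |F|^r = 1 + n·|L±|. Let D̃ = {a·e_i ∈ F^{2n} : a ∈ L± ∪ {0}, n < i ≤ 2n} (e_1,…,e_{2n} the standard basis of F^{2n}) and D̃' = {a·e_i ∈ F^n : a ∈ L± ∪ {0}, 1 ≤ i ≤ n} (e_1,…,e_n the standard basis of F^n). Then the following are equivalent: (1) there exists an r × 2n matrix P over F whose restriction to D̃ is a bijection onto F^r; (2) there exists an r × n matrix Q_2 over F whose restriction to D̃' is a bijection onto F^r; (3) |L±| divides |F| − 1 and there exist distinct elements a_1, …, a_k of F, with k = (|F| − 1)/|L±|, such that F \ {0} = {a_i·λ : 1 ≤ i ≤ k, λ ∈ L±}. -/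
open Matrix

section Aux
set_option linter.unusedSectionVars false
variable {F : Type*} [Field F] [Fintype F] [DecidableEq F]
variable {F : Type*} [Field F] [Fintype F] [DecidableEq F]

/-- Good column family. -/
def Good (Lpm : Finset F) {n r : ℕ} (c : Fin n → (Fin r → F)) : Prop :=
  (∀ i, c i ≠ 0) ∧
  (∀ a a' (i i' : Fin n), a ∈ Lpm → a' ∈ Lpm → a • c i = a' • c i' → a = a' ∧ i = i') ∧
  (∀ y : Fin r → F, y ≠ 0 → ∃ a ∈ Lpm, ∃ i, y = a • c i)

lemma mulVec_smul_single {ι : Type*} [Fintype ι] [DecidableEq ι] {r : ℕ}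
    (M : Matrix (Fin r) ι F) (a : F) (i : ι) :
    M.mulVec (a • (Pi.single i (1:F) : ι → F)) = a • (fun j => M j i) := by
  rw [Matrix.mulVec_smul, Matrix.mulVec_single]
  ext j; simp

lemma bijOn_iff_good {n r : ℕ} (hn : 1 ≤ n) (Lpm : Finset F) (hLpm0 : (0:F) ∉ Lpm)
    (hLne : Lpm.Nonempty)
    {ι : Type*} [Fintype ι] [DecidableEq ι] (f : Fin n → ι) (hf : Function.Injective f)
    (M : Matrix (Fin r) ι F) :
    Set.BijOn M.mulVec
      {x : ι → F | ∃ a : F, (a ∈ Lpm ∨ a = 0) ∧ ∃ i : Fin n, x = a • (Pi.single (f i) (1:F) : ι → F)}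
      Set.univ ↔ Good Lpm (fun i j => M j (f i)) := by
  constructor
  · rintro ⟨-, hinj, hsurj⟩
    obtain ⟨l, hl⟩ := hLne
    have hlne : l ≠ 0 := fun h => hLpm0 (h ▸ hl)
    have i0 : Fin n := ⟨0, hn⟩
    have hmem : ∀ (a : F) (_ : a ∈ Lpm ∨ a = 0) (i : Fin n),
        (a • (Pi.single (f i) (1:F) : ι → F)) ∈
          {x : ι → F | ∃ a : F, (a ∈ Lpm ∨ a = 0) ∧ ∃ i : Fin n, x = a • (Pi.single (f i) (1:F) : ι → F)} :=
      fun a ha i => ⟨a, ha, i, rfl⟩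
    have key : ∀ (a a' : F) (i i' : Fin n), (a ∈ Lpm ∨ a = 0) → (a' ∈ Lpm ∨ a' = 0) →
        a • (fun j => M j (f i)) = a' • (fun j => M j (f i')) →
        a • (Pi.single (f i) (1:F) : ι → F) = a' • (Pi.single (f i') (1:F) : ι → F) := by
      intro a a' i i' ha ha' h
      apply hinj (hmem a ha i) (hmem a' ha' i')
      rw [mulVec_smul_single, mulVec_smul_single]
      exact h
    have hcne : ∀ i : Fin n, (fun j => M j (f i)) ≠ 0 := by
      intro i hc
      have h0 : (0:F) • (fun j => M j (f i)) = (0:F) • (fun j => M j (f i)) := rfl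
      have := key l 0 i i (Or.inl hl) (Or.inr rfl) (by rw [hc]; simp)
      have := congrFun this (f i)
      simp [Pi.single_apply] at this
      exact hlne this
    refine ⟨hcne, ?_, ?_⟩
    · intro a a' i i' ha ha' h
      have := key a a' i i' (Or.inl ha) (Or.inl ha') h
      have hane : a ≠ 0 := fun h0 => hLpm0 (h0 ▸ ha)
      have h1 := congrFun this (f i)
      simp [Pi.single_apply] at h1
      by_cases hii : f i = f i'
      · rw [if_pos hii] at h1
        exact ⟨h1, hf hii⟩
      · rw [if_neg hii] at h1
        exact absurd h1 hane
    · intro y hy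
      obtain ⟨x, hx, hxy⟩ := hsurj (Set.mem_univ y)
      obtain ⟨a, ha, i, rfl⟩ := hx
      rcases ha with ha | rfl
      · exact ⟨a, ha, i, by rw [← hxy, mulVec_smul_single]⟩
      · exfalso; apply hy
        rw [← hxy, mulVec_smul_single]
        simp
  · rintro ⟨hne, hinj, hsurj⟩
    refine ⟨fun x _ => Set.mem_univ _, ?_, ?_⟩
    · rintro x ⟨a, ha, i, rfl⟩ x' ⟨a', ha', i', rfl⟩ h
      rw [mulVec_smul_single, mulVec_smul_single] at h
      rcases ha with ha | rfl
      · rcases ha' with ha' | rfl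
        · obtain ⟨rfl, rfl⟩ := hinj a a' i i' ha ha' h
          rfl
        · exfalso
          apply hne i
          have hane : a ≠ 0 := fun h0 => hLpm0 (h0 ▸ ha)
          have h0 : a • (fun j => M j (f i)) = 0 := by rw [h]; simp
          rcases smul_eq_zero.mp h0 with h' | h'
          · exact absurd h' hane
          · exact h' 
      · rcases ha' with ha' | rfl
        · exfalso
          apply hne i'
          have hane : a' ≠ 0 := fun h0 => hLpm0 (h0 ▸ ha')
          have h0 : a' • (fun j => M j (f i')) = 0 := by rw [← h]; simp
          rcases smul_eq_zero.mp h0 with h' | h'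
          · exact absurd h' hane
          · exact h' 
        · simp
    · intro y _
      by_cases hy : y = 0
      · refine ⟨0, ⟨0, Or.inr rfl, ⟨0, hn⟩, by simp⟩, by simp [hy]⟩
      · obtain ⟨a, ha, i, rfl⟩ := hsurj y hy
        exact ⟨a • (Pi.single (f i) (1:F) : ι → F), ⟨a, Or.inl ha, i, rfl⟩,
          (mulVec_smul_single M a (f i))⟩

lemma smul_cancel_of_ne_zero {r : ℕ} (x : Fin r → F) (hx : x ≠ 0) {μ μ' : F}
    (h : μ • x = μ' • x) : μ = μ' := by
  by_contra hne
  have : (μ - μ') • x = 0 := by rw [sub_smul, h, sub_self]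
  rcases smul_eq_zero.mp this with h' | h'
  · exact hne (sub_eq_zero.mp h')
  · exact hx h'

lemma good_to_partition {n r : ℕ} (hn : 1 ≤ n) (Lpm : Finset F)
    (hLpm0 : (0:F) ∉ Lpm) (hLne : Lpm.Nonempty)
    (c : Fin n → (Fin r → F)) (hg : Good Lpm c) :
    (Lpm.card ∣ Fintype.card F - 1 ∧
      ∃ a : Fin ((Fintype.card F - 1) / Lpm.card) → F, Function.Injective a ∧
        {b : F | b ≠ 0} = {b : F | ∃ i, ∃ l ∈ Lpm, b = a i * l}) := by
  classical
  obtain ⟨hne, hinj, hsurj⟩ := hg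
  obtain ⟨l₀, hl₀⟩ := hLne
  have hl₀ne : l₀ ≠ 0 := fun h => hLpm0 (h ▸ hl₀)
  set c₀ : Fin r → F := c ⟨0, hn⟩ with hc₀def
  have hc₀ : c₀ ≠ 0 := hne _
  set T : Finset (Fin n) := Finset.univ.filter (fun i => ∃ μ : F, c i = μ • c₀) with hT
  set μf : Fin n → F := fun i =>
    if h : ∃ μ : F, c i = μ • c₀ then h.choose else 0 with hμf
  have hμ : ∀ i ∈ T, c i = μf i • c₀ := by
    intro i hi
    rw [hT, Finset.mem_filter] at hi
    simp only [hμf, dif_pos hi.2]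
    exact hi.2.choose_spec
  have hμne : ∀ i ∈ T, μf i ≠ 0 := by
    intro i hi h0
    apply hne i
    rw [hμ i hi, h0, zero_smul]
  -- the union
  set S : Finset F := T.biUnion (fun i => Lpm.image (fun l => μf i * l)) with hS
  have hSmem : ∀ b : F, b ∈ S ↔ b ≠ 0 := by
    intro b
    constructor
    · intro hb
      rw [hS, Finset.mem_biUnion] at hb
      obtain ⟨i, hi, hb⟩ := hb
      rw [Finset.mem_image] at hb
      obtain ⟨l, hl, rfl⟩ := hb
      exact mul_ne_zero (hμne i hi) (fun h => hLpm0 (h ▸ hl))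
    · intro hb
      have hy : b • c₀ ≠ 0 := smul_ne_zero hb hc₀
      obtain ⟨a, ha, i, hai⟩ := hsurj (b • c₀) hy
      have hane : a ≠ 0 := fun h => hLpm0 (h ▸ ha)
      have hci : c i = (a⁻¹ * b) • c₀ := by
        rw [mul_smul, hai, ← mul_smul, inv_mul_cancel₀ hane,
          one_smul]
      have hiT : i ∈ T := by
        rw [hT, Finset.mem_filter]
        exact ⟨Finset.mem_univ _, ⟨_, hci⟩⟩
      have hμi : μf i = a⁻¹ * b :=
        smul_cancel_of_ne_zero c₀ hc₀ ((hμ i hiT).symm.trans hci)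
      have hbval : b = μf i * a := by
        rw [hμi]
        field_simp
      rw [hS, Finset.mem_biUnion]
      exact ⟨i, hiT, Finset.mem_image.mpr ⟨a, ha, hbval.symm⟩⟩
  have hSeq : S = Finset.univ.erase (0:F) := by
    ext b
    rw [hSmem, Finset.mem_erase]
    simp
  -- disjointness and cardinality
  have hdisj : ∀ i ∈ T, ∀ i' ∈ T, i ≠ i' →
      Disjoint (Lpm.image (fun l => μf i * l)) (Lpm.image (fun l => μf i' * l)) := by
    intro i hi i' hi' hii
    rw [Finset.disjoint_left]
    intro b hb hb'
    rw [Finset.mem_image] at hb hb'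
    obtain ⟨l, hl, hbl⟩ := hb
    obtain ⟨l', hl', hbl'⟩ := hb'
    have he : l • c i = l' • c i' := by
      rw [hμ i hi, hμ i' hi', smul_smul, smul_smul, mul_comm l, mul_comm l',
        hbl, hbl']
    exact hii (hinj l l' i i' hl hl' he).2
  have hScard : S.card = T.card * Lpm.card := by
    rw [hS, Finset.card_biUnion hdisj]
    rw [Finset.sum_congr rfl (fun i hi =>
      Finset.card_image_of_injective Lpm (mul_right_injective₀ (hμne i hi)))]
    simp [mul_comm]
  have hq1 : Fintype.card F - 1 = T.card * Lpm.card := by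
    rw [← hScard, hSeq, Finset.card_erase_of_mem (Finset.mem_univ _),
      Finset.card_univ]
  have hm : 0 < Lpm.card := Finset.card_pos.mpr ⟨l₀, hl₀⟩
  refine ⟨⟨T.card, by rw [hq1, mul_comm]⟩, ?_⟩
  have hk : (Fintype.card F - 1) / Lpm.card = T.card := by
    rw [hq1, Nat.mul_div_cancel _ hm]
  have hμinj : ∀ i ∈ T, ∀ i' ∈ T, μf i = μf i' → i = i' := by
    intro i hi i' hi' h
    have : l₀ • c i = l₀ • c i' := by rw [hμ i hi, hμ i' hi', h]
    exact (hinj l₀ l₀ i i' hl₀ hl₀ this).2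
  set e : Fin T.card ≃ {x // x ∈ T} := T.equivFin.symm with he
  refine ⟨fun j => μf (e (Fin.cast hk j)), ?_, ?_⟩
  · intro j j' h
    have h2 := hμinj _ (e (Fin.cast hk j)).2 _ (e (Fin.cast hk j')).2 h
    have h3 : e (Fin.cast hk j) = e (Fin.cast hk j') := Subtype.ext h2
    have h4 := e.injective h3
    exact Fin.ext (by simpa using congrArg Fin.val h4)
  · ext b
    simp only [Set.mem_setOf_eq]
    rw [← hSmem b, hS, Finset.mem_biUnion]
    constructor
    · rintro ⟨i, hi, hb⟩
      rw [Finset.mem_image] at hb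
      obtain ⟨l, hl, rfl⟩ := hb
      refine ⟨Fin.cast hk.symm (e.symm ⟨i, hi⟩), l, hl, ?_⟩
      have : Fin.cast hk (Fin.cast hk.symm (e.symm ⟨i, hi⟩)) = e.symm ⟨i, hi⟩ := by
        ext; simp
      rw [this, e.apply_symm_apply]
    · rintro ⟨j, l, hl, rfl⟩
      exact ⟨(e (Fin.cast hk j) : Fin n), (e (Fin.cast hk j)).2,
        Finset.mem_image.mpr ⟨l, hl, rfl⟩⟩

lemma partition_to_good {n r : ℕ} (hn : 1 ≤ n) (hr : 1 ≤ r) (Lpm : Finset F)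
    (hLpm0 : (0:F) ∉ Lpm) (hLne : Lpm.Nonempty)
    (hcard : Fintype.card F ^ r = 1 + n * Lpm.card)
    (hdvd : Lpm.card ∣ Fintype.card F - 1)
    (a : Fin ((Fintype.card F - 1) / Lpm.card) → F) (hainj : Function.Injective a)
    (hset : {b : F | b ≠ 0} = {b : F | ∃ i, ∃ l ∈ Lpm, b = a i * l}) :
    ∃ c : Fin n → (Fin r → F), Good Lpm c := by
  classical
  have hq2 : 2 ≤ Fintype.card F := Fintype.one_lt_card
  have hmpos : 0 < Lpm.card := Finset.card_pos.mpr hLne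
  have hkm : ((Fintype.card F - 1) / Lpm.card) * Lpm.card = Fintype.card F - 1 :=
    Nat.div_mul_cancel hdvd
  -- each a i is nonzero
  have haine : ∀ i, a i ≠ 0 := by
    intro i hai
    obtain ⟨l, hl⟩ := hLne
    have : (a i * l) ∈ {b : F | ∃ i, ∃ l ∈ Lpm, b = a i * l} := ⟨i, l, hl, rfl⟩
    rw [← hset] at this
    exact this (by rw [hai, zero_mul])
  -- the map φ is bijective
  have hlne : ∀ l ∈ Lpm, l ≠ (0:F) := fun l hl h => hLpm0 (h ▸ hl)
  set φ : Fin ((Fintype.card F - 1) / Lpm.card) × {l : F // l ∈ Lpm} → {b : F // b ≠ 0} :=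
    fun p => ⟨a p.1 * p.2.1, mul_ne_zero (haine p.1) (hlne p.2.1 p.2.2)⟩ with hφ
  have hφsurj : Function.Surjective φ := by
    rintro ⟨b, hb⟩
    have : b ∈ {b : F | ∃ i, ∃ l ∈ Lpm, b = a i * l} := by rw [← hset]; exact hb
    obtain ⟨i, l, hl, rfl⟩ := this
    exact ⟨(i, ⟨l, hl⟩), rfl⟩
  have hcard1 : Fintype.card {b : F // b ≠ 0} = Fintype.card F - 1 := by
    rw [Fintype.card_subtype]
    rw [show Finset.filter (fun b : F => b ≠ 0) Finset.univ = Finset.univ.erase 0 from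
      Finset.filter_ne' _ _]
    rw [Finset.card_erase_of_mem (Finset.mem_univ _), Finset.card_univ]
  have hcard2 : Fintype.card (Fin ((Fintype.card F - 1) / Lpm.card) × {l : F // l ∈ Lpm})
      = Fintype.card F - 1 := by
    rw [Fintype.card_prod, Fintype.card_fin, Fintype.card_coe, hkm]
  have hφbij : Function.Bijective φ :=
    Fintype.bijective_iff_surjective_and_card φ |>.mpr ⟨hφsurj, by rw [hcard1, hcard2]⟩
  have hφinj : ∀ (i i' : Fin ((Fintype.card F - 1) / Lpm.card)) (l l' : F), l ∈ Lpm → l' ∈ Lpm →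
      a i * l = a i' * l' → i = i' ∧ l = l' := by
    intro i i' l l' hl hl' h
    have := hφbij.1 (Subtype.ext h : φ (i, ⟨l, hl⟩) = φ (i', ⟨l', hl'⟩))
    exact ⟨congrArg Prod.fst this, congrArg (fun p => (p.2 : F)) this⟩
  -- the projective quotient
  have hPcard : Fintype.card {x : Fin r → F // x ≠ 0} = Fintype.card F ^ r - 1 := by
    rw [Fintype.card_subtype]
    rw [show Finset.filter (fun x : Fin r → F => x ≠ 0) Finset.univ = Finset.univ.erase 0 from
      Finset.filter_ne' _ _]
    rw [Finset.card_erase_of_mem (Finset.mem_univ _), Finset.card_univ]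
    congr 1
    simp
  set st : Setoid {x : Fin r → F // x ≠ 0} :=
    ⟨fun x y => ∃ μ : F, (x : Fin r → F) = μ • (y : Fin r → F), by
    constructor
    · intro x; exact ⟨1, (one_smul _ _).symm⟩
    · rintro x y ⟨μ, hμ⟩
      have hμne : μ ≠ 0 := by
        rintro rfl
        exact x.2 (by rw [hμ, zero_smul])
      exact ⟨μ⁻¹, by rw [hμ, ← mul_smul, inv_mul_cancel₀ hμne, one_smul]⟩
    · rintro x y z ⟨μ, hμ⟩ ⟨ν, hν⟩
      exact ⟨μ * ν, by rw [hμ, hν, mul_smul]⟩⟩ with hst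
  set Q := Quotient st with hQ
  -- bijection Q × F^× ≃ P
  set ψ : Q × {μ : F // μ ≠ 0} → {x : Fin r → F // x ≠ 0} :=
    fun p => ⟨p.2.1 • ((Quotient.out p.1 : {x : Fin r → F // x ≠ 0}) : Fin r → F),
      smul_ne_zero p.2.2 (Quotient.out p.1).2⟩
    with hψ
  have hψbij : Function.Bijective ψ := by
    constructor
    · rintro ⟨cls, μ, hμ⟩ ⟨cls', μ', hμ'⟩ h
      have h1 : μ • ((Quotient.out cls : {x : Fin r → F // x ≠ 0}) : Fin r → F)
          = μ' • ((Quotient.out cls' : {x : Fin r → F // x ≠ 0}) : Fin r → F) :=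
        congrArg Subtype.val h
      have hrel : st.r (Quotient.out cls) (Quotient.out cls') := by
        refine ⟨μ⁻¹ * μ', ?_⟩
        rw [mul_smul, ← h1, ← mul_smul, inv_mul_cancel₀ hμ, one_smul]
      have hcls : cls = cls' := by
        rw [← Quotient.out_eq cls, ← Quotient.out_eq cls']
        exact Quotient.sound hrel
      subst hcls
      have : μ = μ' := smul_cancel_of_ne_zero _ (Quotient.out cls).2 h1
      simp [this]
    · rintro ⟨x, hx⟩
      set cls : Q := Quotient.mk st ⟨x, hx⟩ with hcls
      have hrel : st.r ⟨x, hx⟩ (Quotient.out cls) := by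
        apply Quotient.exact (s := st)
        rw [Quotient.out_eq]
      obtain ⟨μ, hμ⟩ := hrel
      have hμne : μ ≠ 0 := by
        rintro rfl
        exact hx (hμ.trans (zero_smul F _))
      exact ⟨(cls, ⟨μ, hμne⟩), Subtype.ext hμ.symm⟩
  have hQcard : Fintype.card Q * (Fintype.card F - 1) = Fintype.card F ^ r - 1 := by
    have := Fintype.card_of_bijective hψbij
    rw [Fintype.card_prod] at this
    have hc : Fintype.card {μ : F // μ ≠ 0} = Fintype.card F - 1 := by
      rw [Fintype.card_subtype]
      rw [show Finset.filter (fun b : F => b ≠ 0) Finset.univ = Finset.univ.erase 0 from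
        Finset.filter_ne' _ _]
      rw [Finset.card_erase_of_mem (Finset.mem_univ _), Finset.card_univ]
    rw [hc] at this
    rw [this, hPcard]
  -- n = card Q * k
  have hn' : n = Fintype.card Q * ((Fintype.card F - 1) / Lpm.card) := by
    have h1 : n * Lpm.card = Fintype.card F ^ r - 1 := by omega
    have h2 : Fintype.card Q * ((Fintype.card F - 1) / Lpm.card) * Lpm.card
        = Fintype.card F ^ r - 1 := by
      rw [mul_assoc, hkm, hQcard]
    exact Nat.eq_of_mul_eq_mul_right hmpos (by rw [h1, h2])
  set e : Fin n ≃ Q × Fin ((Fintype.card F - 1) / Lpm.card) := Fintype.equivOfCardEq (by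
    rw [Fintype.card_prod, Fintype.card_fin, Fintype.card_fin, hn']) with he
  refine ⟨fun i => a (e i).2 • ((Quotient.out (e i).1 : {x : Fin r → F // x ≠ 0}) : Fin r → F),
    ?_, ?_, ?_⟩
  · intro i
    exact smul_ne_zero (haine _) (Quotient.out (e i).1).2
  · intro l l' i i' hl hl' h
    rw [smul_smul, smul_smul] at h
    have hne1 : l * a (e i).2 ≠ 0 := mul_ne_zero (hlne l hl) (haine _)
    have hne2 : l' * a (e i').2 ≠ 0 := mul_ne_zero (hlne l' hl') (haine _)
    have hrel : st.r (Quotient.out (e i).1) (Quotient.out (e i').1) := by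
      refine ⟨(l * a (e i).2)⁻¹ * (l' * a (e i').2), ?_⟩
      rw [mul_smul, ← h, ← mul_smul, inv_mul_cancel₀ hne1, one_smul]
    have hcls : (e i).1 = (e i').1 := by
      rw [← Quotient.out_eq (e i).1, ← Quotient.out_eq (e i').1]
      exact Quotient.sound hrel
    rw [hcls] at h
    have hcoef : l * a (e i).2 = l' * a (e i').2 :=
      smul_cancel_of_ne_zero _ (Quotient.out (e i').1).2 h
    have := hφinj (e i).2 (e i').2 l l' hl hl' (by rw [mul_comm (a _), mul_comm (a _)]; exact hcoef)
    refine ⟨this.2, ?_⟩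
    have : e i = e i' := Prod.ext hcls this.1
    exact e.injective this
  · intro y hy
    set cls : Q := Quotient.mk st ⟨y, hy⟩ with hcls
    have hrel : st.r ⟨y, hy⟩ (Quotient.out cls) := by
      apply Quotient.exact (s := st)
      rw [Quotient.out_eq]
    obtain ⟨μ, hμ⟩ := hrel
    have hμne : μ ≠ 0 := by
      rintro rfl
      exact hy (hμ.trans (zero_smul F _))
    have : μ ∈ {b : F | ∃ i, ∃ l ∈ Lpm, b = a i * l} := by rw [← hset]; exact hμne
    obtain ⟨j, l, hl, hμval⟩ := this
    have hy2 : y = μ • ((Quotient.out cls : {x : Fin r → F // x ≠ 0}) : Fin r → F) := hμ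
    refine ⟨l, hl, e.symm (cls, j), ?_⟩
    simp only [e.apply_symm_apply]
    rw [hy2, hμval, smul_smul, mul_comm l]


end Aux

/-- Theorem 7.2: for the two-terminal generalized Hamming source with
deviation alphabet `L± = L ∪ (−L)`, the following are equivalent: (1) existence of an
`r × 2n` matrix bijective from `D̃` onto `F^r`; (2) existence of an `r × n` matrix
bijective from the nontrivial segment `D̃'` onto `F^r`; (3) `|L±|` divides `|F| − 1` and
`F \ {0} = {a_i·λ : 1 ≤ i ≤ k, λ ∈ L±}` for distinct `a_1,…,a_k`, `k = (|F|−1)/|L±|`. -/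
theorem stmt_11 {F : Type*} [Field F] [Fintype F] [DecidableEq F]
    (L : Finset F) (hLne : L.Nonempty) (hL0 : (0 : F) ∉ L)
    (Lpm : Finset F) (hLpm : Lpm = L ∪ L.image (fun x => -x))
    {n r : ℕ} (hn : 1 ≤ n) (hr : 1 ≤ r)
    (hcard : Fintype.card F ^ r = 1 + n * Lpm.card) :
    ((∃ P : Matrix (Fin r) (Fin (2 * n)) F,
        Set.BijOn P.mulVec
          {x : Fin (2 * n) → F | ∃ a : F, (a ∈ Lpm ∨ a = 0) ∧
            ∃ i : Fin (2 * n), n ≤ i.val ∧ x = a • (Pi.single i (1 : F) : Fin (2 * n) → F)}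
          Set.univ) ↔
      (∃ Q₂ : Matrix (Fin r) (Fin n) F,
        Set.BijOn Q₂.mulVec
          {x : Fin n → F | ∃ a : F, (a ∈ Lpm ∨ a = 0) ∧
            ∃ i : Fin n, x = a • (Pi.single i (1 : F) : Fin n → F)}
          Set.univ)) ∧
    ((∃ Q₂ : Matrix (Fin r) (Fin n) F,
        Set.BijOn Q₂.mulVec
          {x : Fin n → F | ∃ a : F, (a ∈ Lpm ∨ a = 0) ∧
            ∃ i : Fin n, x = a • (Pi.single i (1 : F) : Fin n → F)}
          Set.univ) ↔
      (Lpm.card ∣ Fintype.card F - 1 ∧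
        ∃ a : Fin ((Fintype.card F - 1) / Lpm.card) → F, Function.Injective a ∧
          {b : F | b ≠ 0} = {b : F | ∃ i, ∃ l ∈ Lpm, b = a i * l})) := by
  classical
  have hLpm0 : (0 : F) ∉ Lpm := by
    rw [hLpm]
    intro h
    rcases Finset.mem_union.mp h with h | h
    · exact hL0 h
    · obtain ⟨x, hx, hx0⟩ := Finset.mem_image.mp h
      apply hL0
      rwa [show x = 0 from neg_eq_zero.mp hx0] at hx
  have hLpmne : Lpm.Nonempty := by
    obtain ⟨l, hl⟩ := hLne
    exact ⟨l, by rw [hLpm]; exact Finset.mem_union_left _ hl⟩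
  -- the embedding of Fin n into the second half of Fin (2n)
  set f : Fin n → Fin (2 * n) := fun i => ⟨n + i.val, by omega⟩ with hf
  have hfinj : Function.Injective f := by
    intro i j h
    have := congrArg Fin.val h
    simp only [hf] at this
    exact Fin.ext (by omega)
  have hseteq : {x : Fin (2 * n) → F | ∃ a : F, (a ∈ Lpm ∨ a = 0) ∧
        ∃ i : Fin (2 * n), n ≤ i.val ∧ x = a • (Pi.single i (1 : F) : Fin (2 * n) → F)} =
      {x : Fin (2 * n) → F | ∃ a : F, (a ∈ Lpm ∨ a = 0) ∧
        ∃ i : Fin n, x = a • (Pi.single (f i) (1 : F) : Fin (2 * n) → F)} := by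
    ext x
    simp only [Set.mem_setOf_eq]
    constructor
    · rintro ⟨a, ha, i, hni, rfl⟩
      refine ⟨a, ha, ⟨i.val - n, by omega⟩, ?_⟩
      have : f ⟨i.val - n, by omega⟩ = i := Fin.ext (by simp [hf]; omega)
      rw [this]
    · rintro ⟨a, ha, i, rfl⟩
      exact ⟨a, ha, f i, by simp [hf], rfl⟩
  have key1 : (∃ P : Matrix (Fin r) (Fin (2 * n)) F,
      Set.BijOn P.mulVec
        {x : Fin (2 * n) → F | ∃ a : F, (a ∈ Lpm ∨ a = 0) ∧
          ∃ i : Fin (2 * n), n ≤ i.val ∧ x = a • (Pi.single i (1 : F) : Fin (2 * n) → F)}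
        Set.univ) ↔ (∃ c : Fin n → (Fin r → F), Good Lpm c) := by
    constructor
    · rintro ⟨P, hP⟩
      rw [hseteq] at hP
      exact ⟨_, (bijOn_iff_good hn Lpm hLpm0 hLpmne f hfinj P).mp hP⟩
    · rintro ⟨c, hc⟩
      set M : Matrix (Fin r) (Fin (2 * n)) F :=
        Matrix.of (fun j (i : Fin (2 * n)) =>
          if h : n ≤ i.val then c ⟨i.val - n, by omega⟩ j else 0) with hM
      have hcol : (fun i j => M j (f i)) = c := by
        funext i j
        simp only [hM, Matrix.of_apply, hf]
        rw [dif_pos (by omega : n ≤ n + i.val)]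
        congr 1
        exact Fin.ext (by simp)
      refine ⟨M, ?_⟩
      rw [hseteq]
      exact (bijOn_iff_good hn Lpm hLpm0 hLpmne f hfinj M).mpr (by rw [hcol]; exact hc)
  have key2 : (∃ Q₂ : Matrix (Fin r) (Fin n) F,
      Set.BijOn Q₂.mulVec
        {x : Fin n → F | ∃ a : F, (a ∈ Lpm ∨ a = 0) ∧
          ∃ i : Fin n, x = a • (Pi.single i (1 : F) : Fin n → F)}
        Set.univ) ↔ (∃ c : Fin n → (Fin r → F), Good Lpm c) := by
    have hid : Function.Injective (id : Fin n → Fin n) := fun _ _ h => h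
    constructor
    · rintro ⟨Q₂, hQ⟩
      exact ⟨_, (bijOn_iff_good hn Lpm hLpm0 hLpmne id hid Q₂).mp hQ⟩
    · rintro ⟨c, hc⟩
      refine ⟨Matrix.of (fun j i => c i j), ?_⟩
      exact (bijOn_iff_good hn Lpm hLpm0 hLpmne id hid _).mpr hc
  refine ⟨key1.trans key2.symm, key2.trans ?_⟩
  constructor
  · rintro ⟨c, hc⟩
    exact good_to_partition hn Lpm hLpm0 hLpmne c hc
  · rintro ⟨hdvd, a, hainj, hset⟩
    exact partition_to_good hn hr Lpm hLpm0 hLpmne hcard hdvd a hainj hset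
end

section
/- Let F be any field and n ≥ 2 an integer, and let S = {(v, v + a·e_j) : v ∈ F^n, a ∈ F, 1 ≤ j ≤ n} be the two-terminal Hamming source over F. Then every lossless linear compression (H_1, H_2) of S, with H_1 of size m_1 × n and H_2 of size m_2 × n, satisfies m_1 + m_2 ≥ n + 2. -/
open Matrix

/-- The two-terminal Hamming source `S = {(v, v + a·e_j) : v ∈ F^n, a ∈ F, 1 ≤ j ≤ n}`. -/
def TwoHammingSource (F : Type*) [Field F] (n : ℕ) :
    Set ((Fin n → F) × (Fin n → F)) :=
  {p | ∃ (v : Fin n → F) (a : F) (j : Fin n),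
    p = (v, v + a • (Pi.single j (1 : F) : Fin n → F))}

/-- over any field and for `n ≥ 2`, every lossless linear compression
`(H_1, H_2)` of the two-terminal Hamming source has total code length
`m_1 + m_2 ≥ n + 2`. -/
theorem stmt_14 {F : Type*} [Field F] {n : ℕ} (hn : 2 ≤ n)
    {m₁ m₂ : ℕ} (H₁ : Matrix (Fin m₁) (Fin n) F) (H₂ : Matrix (Fin m₂) (Fin n) F)
    (hLoss : Set.InjOn (fun p => (H₁.mulVec p.1, H₂.mulVec p.2))
      (TwoHammingSource F n)) :
    n + 2 ≤ m₁ + m₂ := by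
  set j₀ : Fin n := ⟨0, by omega⟩ with hj₀
  set j₁ : Fin n := ⟨1, by omega⟩ with hj₁
  have hj : j₀ ≠ j₁ := by simp [hj₀, hj₁, Fin.ext_iff]
  set e₀ : Fin n → F := Pi.single j₀ 1 with he₀
  set e₁ : Fin n → F := Pi.single j₁ 1 with he₁
  -- the linear map (v, a, b) ↦ v + a•e₀ + b•e₁
  let g : ((Fin n → F) × F × F) →ₗ[F] (Fin n → F) :=
    LinearMap.fst F (Fin n → F) (F × F)
    + (LinearMap.toSpanSingleton F (Fin n → F) e₀).comp
        ((LinearMap.fst F F F).comp (LinearMap.snd F (Fin n → F) (F × F)))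
    + (LinearMap.toSpanSingleton F (Fin n → F) e₁).comp
        ((LinearMap.snd F F F).comp (LinearMap.snd F (Fin n → F) (F × F)))
  let Ψ : ((Fin n → F) × F × F) →ₗ[F] (Fin m₁ → F) × (Fin m₂ → F) :=
    (H₁.mulVecLin.comp (LinearMap.fst F (Fin n → F) (F × F))).prod (H₂.mulVecLin.comp g)
  have hΨ : ∀ v a b, Ψ (v, a, b) = (H₁.mulVec v, H₂.mulVec (v + a • e₀ + b • e₁)) := by
    intro v a b
    simp [Ψ, g, LinearMap.toSpanSingleton_apply]
  have hinj : Function.Injective Ψ := by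
    rw [← LinearMap.ker_eq_bot, LinearMap.ker_eq_bot']
    rintro ⟨v, a, b⟩ h
    rw [hΨ, Prod.mk.injEq] at h
    obtain ⟨h1, h2⟩ := h
    have hmem1 : ((v, v + a • e₀) : (Fin n → F) × (Fin n → F)) ∈ TwoHammingSource F n :=
      ⟨v, a, j₀, rfl⟩
    have hmem2 : ((0, (0 : Fin n → F) + (-b) • e₁) : (Fin n → F) × (Fin n → F))
        ∈ TwoHammingSource F n := ⟨0, -b, j₁, rfl⟩
    have himg : (H₁.mulVec v, H₂.mulVec (v + a • e₀))
        = (H₁.mulVec 0, H₂.mulVec ((0 : Fin n → F) + (-b) • e₁)) := by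
      have hv : v + a • e₀ = (v + a • e₀ + b • e₁) + ((0 : Fin n → F) + (-b) • e₁) := by
        module
      rw [hv, Matrix.mulVec_add, h2, h1]
      simp
    have heq := hLoss hmem1 hmem2 himg
    rw [Prod.mk.injEq] at heq
    obtain ⟨hv0, hrest⟩ := heq
    rw [hv0, zero_add, zero_add] at hrest
    have ha : a = 0 := by
      have := congrFun hrest j₀
      simpa [he₀, he₁, Pi.single_apply, hj, hj.symm] using this
    have hb : b = 0 := by
      have := congrFun hrest j₁
      simpa [he₀, he₁, Pi.single_apply, hj, hj.symm] using this
    simp [hv0, ha, hb, Prod.ext_iff]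
  have hle := LinearMap.finrank_le_finrank_of_injective hinj
  simpa [Module.finrank_prod, Module.finrank_pi, add_assoc] using hle
end

section
/- Let F be a field containing n distinct elements a_1, …, a_n, and let S = {(v, v + a·e_j) : v ∈ F^n, a ∈ F, 1 ≤ j ≤ n} be the two-terminal Hamming source over F. Let H_1 = I_n be the n × n identity matrix and let H_2 be the 2 × n matrix whose first row is (1, 1, …, 1) and whose second row is (a_1, a_2, …, a_n). Then (H_1, H_2) is a lossless linear compression of S, of total code length n + 2. -/
open Matrix

/-- if `a_1, …, a_n ∈ F` are distinct, then `H_1 = I_n` together with the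
`2 × n` matrix `H_2` whose rows are `(1,…,1)` and `(a_1,…,a_n)` form a lossless linear
compression of the two-terminal Hamming source, of total code length `n + 2`. -/
theorem stmt_15 {F : Type*} [Field F] {n : ℕ} (hn : 1 ≤ n)
    (a : Fin n → F) (ha : Function.Injective a) :
    Set.InjOn
      (fun p : (Fin n → F) × (Fin n → F) =>
        (((1 : Matrix (Fin n) (Fin n) F)).mulVec p.1,
         (Matrix.of fun (k : Fin 2) (j : Fin n) => if k = 0 then 1 else a j).mulVec p.2))
      (TwoHammingSource F n) := by
  rintro p ⟨v, c, j, rfl⟩ q ⟨w, d, k, rfl⟩ heq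
  simp only [Prod.mk.injEq, one_mulVec] at heq
  obtain ⟨h1, h2⟩ := heq
  subst h1
  rw [mulVec_add, mulVec_add, add_right_inj, mulVec_smul, mulVec_smul] at h2
  have hM : ∀ (i : Fin n), (Matrix.of fun (k : Fin 2) (j : Fin n) =>
      if k = 0 then (1 : F) else a j).mulVec (Pi.single i 1) =
      fun m => if m = 0 then 1 else a i := by
    intro i
    funext m
    simp [mulVec_single]
  rw [hM j, hM k] at h2
  have h0 := congrFun h2 0
  have h1' := congrFun h2 1
  simp at h0 h1'
  subst h0
  rcases eq_or_ne c 0 with rfl | hc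
  · simp
  · have := ha (mul_left_cancel₀ hc h1')
    subst this
    rfl
end

section
/- Let F be any field, s ≥ 3 and n ≥ 2 integers, and let S be the Hamming source over F with s terminals and blocklength n. Then every lossless linear compression H_1, …, H_s of S, with H_i of size m_i × n, satisfies m_1 + ⋯ + m_s ≥ max(n + 2, 2s). -/
open Matrix

/-- The Hamming source over `F` with `s` terminals and blocklength `n`: all tuples
`(v,…,v) + δ` where `δ` is zero except possibly in one component, which is `a·e_j`. -/
def HammingSource (F : Type*) [Field F] (s n : ℕ) : Set (Fin s → Fin n → F) :=
  {x | ∃ (v : Fin n → F) (i : Fin s) (a : F) (j : Fin n),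
    x = fun i' => if i' = i then v + a • (Pi.single j (1 : F) : Fin n → F) else v}

/-- over any field, with `s ≥ 3` and `n ≥ 2`, every lossless linear
compression of the Hamming source has total code length at least `max(n + 2, 2s)`. -/
theorem stmt_16 {F : Type*} [Field F] {s n : ℕ} (hs : 3 ≤ s) (hn : 2 ≤ n)
    {m : Fin s → ℕ} (H : ∀ i, Matrix (Fin (m i)) (Fin n) F)
    (hLoss : Lossless H (HammingSource F s n)) :
    max (n + 2) (2 * s) ≤ ∑ i, m i := by
  classical
  obtain ⟨j0, j1, hj⟩ : ∃ j0 j1 : Fin n, j0 ≠ j1 :=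
    ⟨⟨0, by omega⟩, ⟨1, by omega⟩, by simp [Fin.ext_iff]⟩
  obtain ⟨ii0, ii1, ii2, h01, h02, h12⟩ :
      ∃ i0 i1 i2 : Fin s, i0 ≠ i1 ∧ i0 ≠ i2 ∧ i1 ≠ i2 :=
    ⟨⟨0, by omega⟩, ⟨1, by omega⟩, ⟨2, by omega⟩, by simp [Fin.ext_iff], by simp [Fin.ext_iff],
      by simp [Fin.ext_iff]⟩
  have hmem : ∀ (v : Fin n → F) (i : Fin s) (a : F) (j : Fin n),
      (fun i' => if i' = i then v + a • (Pi.single j (1:F) : Fin n → F) else v)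
        ∈ HammingSource F s n := fun v i a j => ⟨v, i, a, j, rfl⟩
  have hdiag : ∀ v : Fin n → F, (fun _ : Fin s => v) ∈ HammingSource F s n := by
    intro v
    refine ⟨v, ii0, 0, j0, ?_⟩
    funext i'
    split <;> simp
  -- every column of every matrix is nonzero
  have hcol : ∀ (i : Fin s) (j : Fin n),
      (H i).mulVec (Pi.single j (1:F)) ≠ 0 := by
    intro i j hzero
    have hx := hmem 0 i 1 j
    have hx' := hdiag 0
    have heq : (fun k => (H k).mulVec
        ((fun i' => if i' = i then (0:Fin n → F) + (1:F) • (Pi.single j (1:F) : Fin n → F)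
          else 0) k))
        = (fun k => (H k).mulVec ((fun _ : Fin s => (0:Fin n → F)) k)) := by
      funext k
      by_cases hk : k = i
      · subst hk
        simp only [eq_self_iff_true, if_true, zero_add, one_smul, Matrix.mulVec_zero]
        exact hzero
      · simp only [if_neg hk]
    have hxx := hLoss hx hx' heq
    have h2 := congrFun (congrFun hxx i) j
    simp at h2
  -- each m i is at least 2
  have hm2 : ∀ i, 2 ≤ m i := by
    intro i
    by_contra hlt
    push_neg at hlt
    have hsub : Subsingleton (Fin (m i)) :=
      Fintype.card_le_one_iff_subsingleton.mp (by simpa using Nat.lt_succ_iff.mp hlt)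
    obtain ⟨c, hc0, hceq⟩ : ∃ c : F, c ≠ 0 ∧
        (H i).mulVec (c • (Pi.single j0 (1:F) : Fin n → F))
          = (H i).mulVec (Pi.single j1 (1:F)) := by
      by_cases hne : Nonempty (Fin (m i))
      · obtain ⟨k0⟩ := hne
        have h0 : (H i).mulVec (Pi.single j0 (1:F)) k0 ≠ 0 := by
          intro h
          exact hcol i j0 (funext fun k => by rw [Subsingleton.elim k k0]; exact h)
        have h1 : (H i).mulVec (Pi.single j1 (1:F)) k0 ≠ 0 := by
          intro h
          exact hcol i j1 (funext fun k => by rw [Subsingleton.elim k k0]; exact h)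
        refine ⟨(H i).mulVec (Pi.single j1 (1:F)) k0 / (H i).mulVec (Pi.single j0 (1:F)) k0,
          div_ne_zero h1 h0, ?_⟩
        funext k
        rw [Subsingleton.elim k k0, Matrix.mulVec_smul]
        simp only [Pi.smul_apply, smul_eq_mul]
        exact div_mul_cancel₀ _ h0
      · exact ⟨1, one_ne_zero, funext fun k => absurd ⟨k⟩ hne⟩
    have hx := hmem 0 i c j0
    have hx' := hmem 0 i 1 j1
    have heq : (fun k => (H k).mulVec
        ((fun i' => if i' = i then (0:Fin n → F) + c • (Pi.single j0 (1:F) : Fin n → F)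
          else 0) k))
        = (fun k => (H k).mulVec
        ((fun i' => if i' = i then (0:Fin n → F) + (1:F) • (Pi.single j1 (1:F) : Fin n → F)
          else 0) k)) := by
      funext k
      by_cases hk : k = i
      · subst hk
        simp only [eq_self_iff_true, if_true, zero_add, one_smul]
        exact hceq
      · simp only [if_neg hk]
    have hxx := hLoss hx hx' heq
    have h2 := congrFun (congrFun hxx i) j1
    simp only [eq_self_iff_true, if_true, Pi.add_apply, Pi.zero_apply, Pi.smul_apply, smul_eq_mul,
      Pi.single_eq_of_ne (Ne.symm hj), Pi.single_eq_same, mul_zero, mul_one, zero_add] at h2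
    exact one_ne_zero h2.symm
  -- bound 2s
  have hsum2 : 2 * s ≤ ∑ i, m i := by
    calc 2 * s = ∑ _i : Fin s, 2 := by simp [Finset.sum_const, mul_comm]
    _ ≤ ∑ i, m i := Finset.sum_le_sum fun i _ => hm2 i
  -- bound n + 2 via a linear map
  have hn2 : n + 2 ≤ ∑ i, m i := by
    set e0 : Fin n → F := Pi.single j0 (1:F) with he0
    set coef : Fin s → F → F → F :=
      fun i b c => if i = ii0 then b else if i = ii1 then c else 0 with hcoef
    have coef_add : ∀ i b c b' c', coef i (b + b') (c + c') = coef i b c + coef i b' c' := by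
      intro i b c b' c'
      simp only [hcoef]
      split_ifs <;> ring
    have coef_smul : ∀ (i) (a b c : F), coef i (a * b) (a * c) = a * coef i b c := by
      intro i a b c
      simp only [hcoef]
      split_ifs <;> ring
    let Λ : ((Fin n → F) × F × F) →ₗ[F] (∀ i : Fin s, Fin (m i) → F) :=
      { toFun := fun p i => (H i).mulVec (p.1 + coef i p.2.1 p.2.2 • e0)
        map_add' := by
          intro p q
          funext i
          show (H i).mulVec ((p.1 + q.1) + coef i (p.2.1 + q.2.1) (p.2.2 + q.2.2) • e0)
            = (H i).mulVec (p.1 + coef i p.2.1 p.2.2 • e0)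
              + (H i).mulVec (q.1 + coef i q.2.1 q.2.2 • e0)
          rw [coef_add, add_smul]
          rw [show p.1 + q.1 + (coef i p.2.1 p.2.2 • e0 + coef i q.2.1 q.2.2 • e0)
            = (p.1 + coef i p.2.1 p.2.2 • e0) + (q.1 + coef i q.2.1 q.2.2 • e0) by abel]
          rw [Matrix.mulVec_add]
        map_smul' := by
          intro a p
          funext i
          show (H i).mulVec (a • p.1 + coef i (a * p.2.1) (a * p.2.2) • e0)
            = a • (H i).mulVec (p.1 + coef i p.2.1 p.2.2 • e0)
          rw [coef_smul, mul_smul, ← smul_add, Matrix.mulVec_smul] }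
    have hker : ∀ p : (Fin n → F) × F × F, Λ p = 0 → p = 0 := by
      rintro ⟨w, b, c⟩ h
      have happ : ∀ i : Fin s, (H i).mulVec (w + coef i b c • e0) = 0 := fun i => congrFun h i
      have h0' : (H ii0).mulVec (w + b • e0) = 0 := by
        have := happ ii0
        simpa [hcoef] using this
      have h1' : (H ii1).mulVec (w + c • e0) = 0 := by
        have := happ ii1
        simpa [hcoef, if_neg (Ne.symm h01)] using this
      have hrest : ∀ i, i ≠ ii0 → i ≠ ii1 → (H i).mulVec w = 0 := by
        intro i hi0 hi1
        have := happ i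
        simpa [hcoef, hi0, hi1] using this
      by_cases hw : w = 0
      · subst hw
        have hb : b = 0 := by
          have hz : b • (H ii0).mulVec e0 = 0 := by
            rw [← Matrix.mulVec_smul]
            simpa using h0'
          rcases smul_eq_zero.mp hz with hb | hz'
          · exact hb
          · exact absurd hz' (hcol ii0 j0)
        have hc : c = 0 := by
          have hz : c • (H ii1).mulVec e0 = 0 := by
            rw [← Matrix.mulVec_smul]
            simpa using h1'
          rcases smul_eq_zero.mp hz with hc | hz'
          · exact hc
          · exact absurd hz' (hcol ii1 j0)
        simp [hb, hc, Prod.ext_iff]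
      · exfalso
        have hx := hmem 0 ii0 (-b) j0
        have hx' := hmem w ii1 c j0
        have heq : (fun k => (H k).mulVec
            ((fun i' => if i' = ii0 then (0:Fin n → F) + (-b) • (Pi.single j0 (1:F) : Fin n → F)
              else 0) k))
            = (fun k => (H k).mulVec
            ((fun i' => if i' = ii1 then w + c • (Pi.single j0 (1:F) : Fin n → F)
              else w) k)) := by
          funext k
          by_cases hk0 : k = ii0
          · subst hk0
            simp only [eq_self_iff_true, if_true, if_neg h01, zero_add]
            have hw0 : (H k).mulVec w = (-b) • (H k).mulVec e0 := by
              have hz : (H k).mulVec w + b • (H k).mulVec e0 = 0 := by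
                rw [← Matrix.mulVec_smul, ← Matrix.mulVec_add]
                exact h0'
              rw [neg_smul]
              linear_combination (norm := module) hz
            rw [Matrix.mulVec_smul, ← he0, ← hw0]
          · by_cases hk1 : k = ii1
            · subst hk1
              simp only [if_neg hk0, eq_self_iff_true, if_true, Matrix.mulVec_zero]
              rw [← he0]
              exact h1'.symm
            · simp only [if_neg hk0, if_neg hk1, Matrix.mulVec_zero]
              exact (hrest k hk0 hk1).symm
        have hxx := hLoss hx hx' heq
        have h2 := congrFun hxx ii2
        simp only [if_neg (Ne.symm h02), if_neg (Ne.symm h12)] at h2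
        exact hw h2.symm
    have hinj : Function.Injective Λ := by
      intro p q hpq
      have hz : Λ (p - q) = 0 := by rw [map_sub, hpq, sub_self]
      exact sub_eq_zero.mp (hker _ hz)
    have hle := LinearMap.finrank_le_finrank_of_injective hinj
    rw [Module.finrank_prod, Module.finrank_prod, Module.finrank_fin_fun,
      Module.finrank_self, Module.finrank_pi_fintype] at hle
    simpa [Module.finrank_fin_fun] using hle
  exact max_le hn2 hsum2
end

section
/- Let F be a finite field with q = |F|, n ≥ 1 an integer, and S = {(v, v + a·e_j) : v ∈ F^n, a ∈ F, 1 ≤ j ≤ n} the two-terminal Hamming source over F. Let r' be the least nonnegative integer r such that n·(q − 1) ≤ q^r − 1. Then: (a) every lossless linear compression (H_1, H_2) of S satisfies m_1 + m_2 ≥ n + r'; and (b) there exists a lossless linear compression of S with total code length exactly n + r'. Hence the minimal total code length of a lossless linear compression of S equals n + r'. -/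
open Matrix

/-- over a finite field with `q` elements, if `r'` is the least
nonnegative integer `r` with `n·(q−1) ≤ q^r − 1`, then (a) every lossless linear
compression `(H_1, H_2)` of the two-terminal Hamming source satisfies
`m_1 + m_2 ≥ n + r'`, and (b) some lossless linear compression attains total code
length exactly `n + r'`. -/
theorem stmt_18 {F : Type*} [Field F] [Fintype F] {n : ℕ} (hn : 1 ≤ n) (r' : ℕ)
    (hr' : n * (Fintype.card F - 1) ≤ Fintype.card F ^ r' - 1)
    (hmin : ∀ r < r', ¬ (n * (Fintype.card F - 1) ≤ Fintype.card F ^ r - 1)) :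
    (∀ {m₁ m₂ : ℕ} (H₁ : Matrix (Fin m₁) (Fin n) F) (H₂ : Matrix (Fin m₂) (Fin n) F),
      Set.InjOn (fun p => (H₁.mulVec p.1, H₂.mulVec p.2)) (TwoHammingSource F n) →
      n + r' ≤ m₁ + m₂) ∧
    (∃ (m₁ m₂ : ℕ) (H₁ : Matrix (Fin m₁) (Fin n) F) (H₂ : Matrix (Fin m₂) (Fin n) F),
      Set.InjOn (fun p => (H₁.mulVec p.1, H₂.mulVec p.2)) (TwoHammingSource F n) ∧
      m₁ + m₂ = n + r') := by
  classical
  have hq : 2 ≤ Fintype.card F := Fintype.one_lt_card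
  constructor
  · -- Lower bound
    intro m₁ m₂ H₁ H₂ hInj
    -- Key consequence of injectivity
    have key : ∀ (u : Fin n → F) (a a' : F) (j j' : Fin n),
        H₁ *ᵥ u = 0 →
        H₂ *ᵥ (u + a' • (Pi.single j' (1:F) : Fin n → F)
          - a • (Pi.single j (1:F) : Fin n → F)) = 0 →
        u = 0 ∧ a • (Pi.single j (1:F) : Fin n → F)
          = a' • (Pi.single j' (1:F) : Fin n → F) := by
      intro u a a' j j' h1 h2
      have p1m : ((0:Fin n → F), 0 + a • (Pi.single j (1:F) : Fin n → F))
          ∈ TwoHammingSource F n := ⟨0, a, j, rfl⟩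
      have p2m : (u, u + a' • (Pi.single j' (1:F) : Fin n → F))
          ∈ TwoHammingSource F n := ⟨u, a', j', rfl⟩
      have h2' : H₂ *ᵥ (u + a' • (Pi.single j' (1:F) : Fin n → F))
          = H₂ *ᵥ (a • (Pi.single j (1:F) : Fin n → F)) := by
        rw [mulVec_sub] at h2
        exact sub_eq_zero.mp h2
      have himg : (fun p : (Fin n → F) × (Fin n → F) => (H₁ *ᵥ p.1, H₂ *ᵥ p.2))
            ((0:Fin n → F), 0 + a • (Pi.single j (1:F) : Fin n → F))
          = (fun p : (Fin n → F) × (Fin n → F) => (H₁ *ᵥ p.1, H₂ *ᵥ p.2))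
            (u, u + a' • (Pi.single j' (1:F) : Fin n → F)) := by
        simp only [Prod.mk.injEq]
        exact ⟨by rw [mulVec_zero, h1], by rw [zero_add, h2']⟩
      have hpe := hInj p1m p2m himg
      have hu : u = 0 := ((Prod.ext_iff.mp hpe).1).symm
      have hs := (Prod.ext_iff.mp hpe).2
      rw [hu, zero_add, zero_add] at hs
      exact ⟨hu, hs⟩
    set K₁ := LinearMap.ker H₁.mulVecLin with hK₁
    set K₂ := LinearMap.ker H₂.mulVecLin with hK₂
    set k₁ := Module.finrank F K₁ with hk₁
    set k₂ := Module.finrank F K₂ with hk₂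
    set g : Option (Fin n × Fˣ) → (Fin n → F) :=
      fun t => t.elim 0 (fun x => (x.2 : F) • (Pi.single x.1 (1:F) : Fin n → F)) with hg
    have grep : ∀ t, ∃ (a : F) (jx : Fin n),
        g t = a • (Pi.single jx (1:F) : Fin n → F) := by
      intro t
      cases t with
      | none => exact ⟨0, ⟨0, hn⟩, by simp [hg]⟩
      | some x => exact ⟨x.2, x.1, rfl⟩
    have ginj : Function.Injective g := by
      intro t t' h
      have hval : ∀ (x : Fin n × Fˣ) (i : Fin n),
          g (some x) i = if i = x.1 then (x.2 : F) else 0 := by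
        intro x i
        simp [hg, Pi.single_apply]
      cases t with
      | none =>
        cases t' with
        | none => rfl
        | some x =>
          exfalso
          have h0 := congrFun h x.1
          rw [hval x x.1, if_pos rfl] at h0
          exact x.2.ne_zero (by simpa [hg] using h0.symm)
      | some x =>
        cases t' with
        | none =>
          exfalso
          have h0 := congrFun h x.1
          rw [hval x x.1, if_pos rfl] at h0
          exact x.2.ne_zero (by simpa [hg] using h0)
        | some y =>
          have hj : x.1 = y.1 := by
            by_contra hne
            have h0 := congrFun h x.1
            rw [hval x x.1, if_pos rfl, hval y x.1, if_neg hne] at h0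
            exact x.2.ne_zero h0
          have ha : (x.2 : F) = (y.2 : F) := by
            have h0 := congrFun h x.1
            rw [hval x x.1, if_pos rfl, hval y x.1, if_pos hj] at h0
            exact h0
          cases x; cases y
          simp only at hj ha
          congr 1
          exact Prod.ext hj (Units.ext ha)
    set Φ : K₁ × K₂ × Option (Fin n × Fˣ) → (Fin n → F) :=
      fun x => (x.1 : Fin n → F) + (x.2.1 : Fin n → F) + g x.2.2 with hΦ
    have Φinj : Function.Injective Φ := by
      rintro ⟨u, z, t⟩ ⟨u', z', t'⟩ h
      simp only [hΦ] at h
      obtain ⟨b, jb, hb⟩ := grep t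
      obtain ⟨c, jc, hc⟩ := grep t'
      have hu1 : H₁ *ᵥ ((u : Fin n → F) - u') = 0 := by
        rw [mulVec_sub]
        have e1 : H₁ *ᵥ (u : Fin n → F) = 0 := u.2
        have e2 : H₁ *ᵥ (u' : Fin n → F) = 0 := u'.2
        rw [e1, e2, sub_zero]
      have hveq : ((u : Fin n → F) - u') + g t - g t' = (z' : Fin n → F) - z := by
        funext i
        have h0 := congrFun h i
        simp only [Pi.add_apply, Pi.sub_apply] at h0 ⊢
        linear_combination h0
      have hu2 : H₂ *ᵥ (((u : Fin n → F) - u')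
          + b • (Pi.single jb (1:F) : Fin n → F)
          - c • (Pi.single jc (1:F) : Fin n → F)) = 0 := by
        rw [← hb, ← hc, hveq, mulVec_sub]
        have e1 : H₂ *ᵥ (z : Fin n → F) = 0 := z.2
        have e2 : H₂ *ᵥ (z' : Fin n → F) = 0 := z'.2
        rw [e1, e2, sub_zero]
      obtain ⟨huu, hgg⟩ := key ((u : Fin n → F) - u') c b jc jb hu1 hu2
      have hu' : u = u' := Subtype.ext (sub_eq_zero.mp huu)
      have ht' : t' = t := ginj (by rw [hb, hc, hgg])
      have hz' : z = z' := by
        apply Subtype.ext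
        have := hveq
        rw [huu, ht', zero_add, sub_self] at this
        exact (sub_eq_zero.mp this.symm).symm
      rw [hu', hz', ht']
    have hcard := Fintype.card_le_of_injective Φ Φinj
    have hcK1 : Fintype.card K₁ = Fintype.card F ^ k₁ := Module.card_eq_pow_finrank
    have hcK2 : Fintype.card K₂ = Fintype.card F ^ k₂ := Module.card_eq_pow_finrank
    rw [Fintype.card_prod, Fintype.card_prod, hcK1, hcK2, Fintype.card_option,
      Fintype.card_prod, Fintype.card_fin, Fintype.card_units, Fintype.card_fun,
      Fintype.card_fin] at hcard
    -- hcard : q^k₁ * (q^k₂ * (n * (q-1) + 1)) ≤ q^n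
    set q := Fintype.card F
    have hq1 : q ≤ n * (q - 1) + 1 := by
      have := Nat.mul_le_mul hn (le_refl (q - 1))
      omega
    have hst : k₁ + k₂ + 1 ≤ n := by
      have h1 : q ^ (k₁ + k₂ + 1) ≤ q ^ n := by
        calc q ^ (k₁ + k₂ + 1) = q ^ k₁ * (q ^ k₂ * q) := by ring
          _ ≤ q ^ k₁ * (q ^ k₂ * (n * (q - 1) + 1)) :=
              Nat.mul_le_mul_left _ (Nat.mul_le_mul_left _ hq1)
          _ ≤ q ^ n := hcard
      exact (Nat.pow_le_pow_iff_right (by omega)).mp h1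
    set d := n - (k₁ + k₂) with hd
    have hdq : n * (q - 1) + 1 ≤ q ^ d := by
      have hsplit : q ^ n = q ^ (k₁ + k₂) * q ^ d := by
        rw [← pow_add]; congr 1; omega
      have h1 : q ^ (k₁ + k₂) * (n * (q - 1) + 1) ≤ q ^ (k₁ + k₂) * q ^ d := by
        calc q ^ (k₁ + k₂) * (n * (q - 1) + 1)
            = q ^ k₁ * (q ^ k₂ * (n * (q - 1) + 1)) := by ring
          _ ≤ q ^ n := hcard
          _ = q ^ (k₁ + k₂) * q ^ d := hsplit
      exact Nat.le_of_mul_le_mul_left h1 (pow_pos (by omega) _)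
    have hrd : r' ≤ d := by
      by_contra hcon
      exact hmin d (by omega) (by omega)
    have hr1 : n ≤ m₁ + k₁ := by
      have hrn := LinearMap.finrank_range_add_finrank_ker H₁.mulVecLin
      have hker : Module.finrank F (LinearMap.ker H₁.mulVecLin) = k₁ := rfl
      rw [hker] at hrn
      have hle : Module.finrank F (LinearMap.range H₁.mulVecLin) ≤ m₁ := by
        have := Submodule.finrank_le (LinearMap.range H₁.mulVecLin)
        rwa [Module.finrank_fin_fun] at this
      rw [Module.finrank_fin_fun] at hrn
      omega
    have hr2 : n ≤ m₂ + k₂ := by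
      have hrn := LinearMap.finrank_range_add_finrank_ker H₂.mulVecLin
      have hker : Module.finrank F (LinearMap.ker H₂.mulVecLin) = k₂ := rfl
      rw [hker] at hrn
      have hle : Module.finrank F (LinearMap.range H₂.mulVecLin) ≤ m₂ := by
        have := Submodule.finrank_le (LinearMap.range H₂.mulVecLin)
        rwa [Module.finrank_fin_fun] at this
      rw [Module.finrank_fin_fun] at hrn
      omega
    omega
  · -- Achievability
    set q := Fintype.card F with hqdef
    set V := Fin r' → F with hV
    set f : {v : V // v ≠ 0} → Projectivization F V :=
      fun v => Projectivization.mk F v.1 v.2 with hf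
    have hfib : ∀ b ∈ (Finset.univ.image f),
        (Finset.univ.filter (fun v => f v = b)).card ≤ q - 1 := by
      intro b _
      have hsub : Finset.univ.filter (fun v => f v = b)
          ⊆ Finset.univ.image (fun a : Fˣ =>
            (⟨(a : F) • b.rep, smul_ne_zero a.ne_zero b.rep_nonzero⟩ : {v : V // v ≠ 0})) := by
        intro v hv
        simp only [Finset.mem_filter, Finset.mem_univ, true_and] at hv
        have hmk : Projectivization.mk F v.1 v.2
            = Projectivization.mk F b.rep b.rep_nonzero := by
          rw [Projectivization.mk_rep b]
          exact hv
        obtain ⟨a, ha⟩ := (Projectivization.mk_eq_mk_iff F _ _ _ _).mp hmk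
        simp only [Finset.mem_image, Finset.mem_univ, true_and]
        exact ⟨a, Subtype.ext ha⟩
      calc (Finset.univ.filter (fun v => f v = b)).card
          ≤ _ := Finset.card_le_card hsub
        _ ≤ Fintype.card Fˣ := le_trans Finset.card_image_le (by simp)
        _ = q - 1 := by rw [Fintype.card_units]
    have hNcard := Finset.card_le_mul_card_image
      (Finset.univ : Finset {v : V // v ≠ 0}) (q - 1) hfib
    have hcardV : (Finset.univ : Finset {v : V // v ≠ 0}).card = q ^ r' - 1 := by
      rw [Finset.card_univ]
      have h1 : Fintype.card {v : V // ¬ v = 0} = Fintype.card V - Fintype.card {v : V // v = 0} :=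
        Fintype.card_subtype_compl _
      have h2 : Fintype.card {v : V // v = 0} = 1 := Fintype.card_subtype_eq (0 : V)
      have h3 : Fintype.card V = q ^ r' := by
        show Fintype.card (Fin r' → F) = q ^ r'
        rw [Fintype.card_fun, Fintype.card_fin]
      simp only [ne_eq]
      rw [h1, h2, h3]
    have hNn : n ≤ (Finset.univ.image f).card := by
      have h1 : n * (q - 1) ≤ (q - 1) * (Finset.univ.image f).card := by
        calc n * (q - 1) ≤ q ^ r' - 1 := hr'
          _ = (Finset.univ : Finset {v : V // v ≠ 0}).card := hcardV.symm
          _ ≤ (q - 1) * (Finset.univ.image f).card := hNcard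
      rw [mul_comm n (q - 1)] at h1
      exact Nat.le_of_mul_le_mul_left h1 (by omega)
    obtain ⟨t, hts, htc⟩ := Finset.exists_subset_card_eq hNn
    set e := Finset.equivFinOfCardEq htc with he
    set p : Fin n → Projectivization F V := fun i => ((e.symm i : t) : Projectivization F V)
      with hp
    have pinj : Function.Injective p := by
      intro i i' hii
      exact e.symm.injective (Subtype.ext hii)
    set c : Fin n → V := fun i => (p i).rep with hc
    have hc0 : ∀ i, c i ≠ 0 := fun i => (p i).rep_nonzero
    set H₂ : Matrix (Fin r') (Fin n) F := Matrix.of (fun i jx => c jx i) with hH₂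
    have hmv : ∀ (a : F) (j : Fin n),
        H₂ *ᵥ (a • (Pi.single j (1:F) : Fin n → F)) = a • c j := by
      intro a j
      rw [mulVec_smul, mulVec_single_one]
      congr 1
    refine ⟨n, r', 1, H₂, ?_, rfl⟩
    intro x hx y hy hxy
    obtain ⟨v, a, j, rfl⟩ := hx
    obtain ⟨v', a', j', rfl⟩ := hy
    simp only [Prod.mk.injEq] at hxy
    have hv : v = v' := by
      have := hxy.1
      rwa [one_mulVec, one_mulVec] at this
    have hsm : a • c j = a' • c j' := by
      have h2 := hxy.2
      rw [hv, mulVec_add, mulVec_add, hmv, hmv] at h2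
      exact add_left_cancel h2
    have hsingle : a • (Pi.single j (1:F) : Fin n → F)
        = a' • (Pi.single j' (1:F) : Fin n → F) := by
      by_cases ha : a = 0
      · have ha' : a' = 0 := by
          rw [ha, zero_smul] at hsm
          rcases smul_eq_zero.mp hsm.symm with h | h
          · exact h
          · exact absurd h (hc0 j')
        rw [ha, ha', zero_smul, zero_smul]
      · have ha' : a' ≠ 0 := by
          intro h0
          rw [h0, zero_smul] at hsm
          rcases smul_eq_zero.mp hsm with h | h
          · exact ha h
          · exact (hc0 j) h
        have hmkeq : Projectivization.mk F (c j) (hc0 j)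
            = Projectivization.mk F (c j') (hc0 j') := by
          rw [Projectivization.mk_eq_mk_iff']
          refine ⟨a⁻¹ * a', ?_⟩
          rw [← smul_smul, ← hsm, smul_smul, inv_mul_cancel₀ ha, one_smul]
        have hpj : p j = p j' := by
          have h1 : Projectivization.mk F (c j) (hc0 j) = p j := Projectivization.mk_rep _
          have h2 : Projectivization.mk F (c j') (hc0 j') = p j' := Projectivization.mk_rep _
          rw [← h1, ← h2, hmkeq]
        have hjj : j = j' := pinj hpj
        subst hjj
        have haa : a = a' := by
          have : (a - a') • c j = 0 := by
            rw [sub_smul, hsm, sub_self]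
          rcases smul_eq_zero.mp this with h | h
          · exact sub_eq_zero.mp h
          · exact absurd h (hc0 j)
        rw [haa]
    exact Prod.ext hv (by rw [hv, hsingle])
end
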